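/- arXiv:1603.07799 — 10 statements merged into one kernel-verified Lean document; each statement's English description precedes it below -/
import Mathlib

section
/- Let λ be a nonzero real number, let F : (-1, ∞) → ℝ be defined by F(t) = 1/((1+t)^λ + 1), and let a_k(N;λ) be the recursively defined coefficients. Then for every integer N ≥ 1, F is N times differentiable on (-1, ∞) and for all t > -1 the N-th derivative satisfies F^(N)(t) = ((−1)^N · λ/(1+t)^N) · Σ_{i=1}^{N+1} a_{i-1}(N;λ) · F(t)^i. -/
open Filter Finset

lemma icc_sum (n : ℕ) (f : ℕ → ℝ) :
    ∑ i ∈ Finset.Icc 1 (n+1), f i = ∑ k ∈ Finset.range (n+1), f (k+1) := by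
  rw [← Finset.Ico_add_one_right_eq_Icc, Finset.sum_Ico_eq_sum_range]
  simp [Nat.add_comm]

noncomputable def Gb (lam : ℝ) : ℝ → ℝ := fun t => ((1 + t) ^ lam + 1)⁻¹

noncomputable def Pb (lam : ℝ) (a : ℕ → ℕ → ℝ) (N : ℕ) : ℝ → ℝ := fun t =>
  (-1 : ℝ) ^ N * lam / (1 + t) ^ N * ∑ i ∈ Finset.Icc 1 (N + 1), a (i - 1) N * Gb lam t ^ i

lemma Gb_hasDerivAt (lam : ℝ) (t : ℝ) (ht : -1 < t) :
    HasDerivAt (Gb lam) (-lam / (1 + t) * (Gb lam t - Gb lam t ^ 2)) t := by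
  have h1t : (0:ℝ) < 1 + t := by linarith
  have hrp : (0:ℝ) < (1 + t) ^ lam := Real.rpow_pos_of_pos h1t lam
  have hden : (1 + t) ^ lam + 1 ≠ 0 := by positivity
  have hc : HasDerivAt (fun t : ℝ => 1 + t) 1 t := (hasDerivAt_id t).const_add 1
  have h1 : HasDerivAt (fun t : ℝ => (1 + t) ^ lam) (lam * (1 + t) ^ (lam - 1)) t := by
    have h0 := Real.hasDerivAt_rpow_const (x := 1 + t) (p := lam) (Or.inl h1t.ne')
    have h2 := h0.comp t hc
    rw [mul_one] at h2
    exact h2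
  have h3 := (h1.add_const 1).inv hden
  refine h3.congr_deriv ?_
  have hral : (1 + t) ^ (lam - 1) = (1 + t) ^ lam / (1 + t) := by
    rw [Real.rpow_sub h1t, Real.rpow_one]
  simp only [Gb, hral]
  field_simp
  ring

lemma Pb_hasDerivAt (lam : ℝ) (a : ℕ → ℕ → ℝ) (N : ℕ) (hN : 1 ≤ N) (t : ℝ) (ht : -1 < t) :
    HasDerivAt (Pb lam a N)
      ((-1 : ℝ) ^ (N + 1) * lam / (1 + t) ^ (N + 1) *
        ((N : ℝ) * ∑ i ∈ Finset.Icc 1 (N + 1), a (i - 1) N * Gb lam t ^ i +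
          lam * ∑ i ∈ Finset.Icc 1 (N + 1),
            (i : ℝ) * a (i - 1) N * (Gb lam t ^ i - Gb lam t ^ (i + 1)))) t := by
  have h1t : (0:ℝ) < 1 + t := by linarith
  have hne : ((1:ℝ) + t) ^ N ≠ 0 := pow_ne_zero _ h1t.ne'
  have hG := Gb_hasDerivAt lam t ht
  have hpw : HasDerivAt (fun t : ℝ => (1 + t) ^ N) ((N : ℝ) * (1 + t) ^ (N - 1)) t := by
    have hc : HasDerivAt (fun t : ℝ => 1 + t) 1 t := (hasDerivAt_id t).const_add 1
    have h2 := hc.pow N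
    rw [mul_one] at h2
    exact h2
  have hu : HasDerivAt (fun t : ℝ => (-1 : ℝ) ^ N * lam * ((1 + t) ^ N)⁻¹)
      ((-1 : ℝ) ^ N * lam * (-((N : ℝ) * (1 + t) ^ (N - 1)) / ((1 + t) ^ N) ^ 2)) t :=
    (hpw.inv hne).const_mul _
  have hS : HasDerivAt (fun t : ℝ => ∑ i ∈ Finset.Icc 1 (N + 1), a (i - 1) N * Gb lam t ^ i)
      (∑ i ∈ Finset.Icc 1 (N + 1),
        a (i - 1) N * ((i : ℝ) * Gb lam t ^ (i - 1) *
          (-lam / (1 + t) * (Gb lam t - Gb lam t ^ 2)))) t :=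
    HasDerivAt.fun_sum fun i _ => (hG.pow i).const_mul _
  have hprod := hu.mul hS
  have hfun : (Pb lam a N) = fun t : ℝ =>
      ((-1 : ℝ) ^ N * lam * ((1 + t) ^ N)⁻¹) *
        ∑ i ∈ Finset.Icc 1 (N + 1), a (i - 1) N * Gb lam t ^ i := by
    funext s; simp [Pb, div_eq_mul_inv]
  rw [hfun]
  refine hprod.congr_deriv ?_
  -- algebra
  set x := Gb lam t with hx
  have hsum2 : ∑ i ∈ Finset.Icc 1 (N + 1),
      a (i - 1) N * ((i : ℝ) * x ^ (i - 1) * (-lam / (1 + t) * (x - x ^ 2)))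
      = (-lam / (1 + t)) *
        ∑ i ∈ Finset.Icc 1 (N + 1), (i : ℝ) * a (i - 1) N * (x ^ i - x ^ (i + 1)) := by
    rw [Finset.mul_sum]
    refine Finset.sum_congr rfl fun i hi => ?_
    have hi1 : 1 ≤ i := (Finset.mem_Icc.mp hi).1
    obtain ⟨j, rfl⟩ : ∃ j, i = j + 1 := ⟨i - 1, by omega⟩
    simp only [Nat.add_sub_cancel]
    ring
  rw [hsum2]
  have e1 : ((1:ℝ) + t) ^ (N - 1) = (1 + t) ^ N / (1 + t) := by
    rw [eq_div_iff h1t.ne', ← pow_succ]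
    congr 1; omega
  rw [e1, pow_succ (-1 : ℝ) N, pow_succ (1 + t) N]
  set y := ((1:ℝ) + t) ^ N with hy
  set S := ∑ i ∈ Finset.Icc 1 (N + 1), a (i - 1) N * x ^ i with hSdef
  set T := ∑ i ∈ Finset.Icc 1 (N + 1), (i : ℝ) * a (i - 1) N * (x ^ i - x ^ (i + 1)) with hT
  field_simp
  ring

lemma sum_rec (lam : ℝ) (a : ℕ → ℕ → ℝ)
    (haTop : ∀ N : ℕ, 1 ≤ N → a 0 (N + 1) = ((N : ℝ) + lam) * a 0 N)
    (haBot : ∀ N : ℕ, 1 ≤ N →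
      a (N + 1) (N + 1) = -(((N : ℝ) + 1) * lam) * a N N)
    (haMid : ∀ N : ℕ, 1 ≤ N → ∀ i : ℕ, 2 ≤ i → i ≤ N + 1 →
      a (i - 1) (N + 1) =
        -(((i : ℝ) - 1) * lam) * a (i - 2) N + ((N : ℝ) + (i : ℝ) * lam) * a (i - 1) N)
    (N : ℕ) (hN : 1 ≤ N) (x : ℝ) :
    (N : ℝ) * ∑ i ∈ Finset.Icc 1 (N + 1), a (i - 1) N * x ^ i +
      lam * ∑ i ∈ Finset.Icc 1 (N + 1), (i : ℝ) * a (i - 1) N * (x ^ i - x ^ (i + 1)) =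
    ∑ i ∈ Finset.Icc 1 (N + 2), a (i - 1) (N + 1) * x ^ i := by
  have hIcc2 : ∑ i ∈ Finset.Icc 1 (N + 2), a (i - 1) (N + 1) * x ^ i
      = ∑ k ∈ Finset.range (N + 2), a k (N + 1) * x ^ (k + 1) := by
    rw [show N + 2 = (N + 1) + 1 from rfl, icc_sum]
    simp
  rw [hIcc2, icc_sum, icc_sum]
  simp only [Nat.add_sub_cancel]
  push_cast
  rw [Finset.mul_sum, Finset.mul_sum, ← Finset.sum_add_distrib]
  have lhs_eq : ∀ k ∈ Finset.range (N + 1),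
      (N : ℝ) * (a k N * x ^ (k + 1)) +
        lam * (((k : ℝ) + 1) * a k N * (x ^ (k + 1) - x ^ (k + 1 + 1)))
      = ((N : ℝ) + ((k : ℝ) + 1) * lam) * a k N * x ^ (k + 1)
        - ((k : ℝ) + 1) * lam * a k N * x ^ (k + 2) := by
    intro k _; ring
  rw [Finset.sum_congr rfl lhs_eq, Finset.sum_sub_distrib]
  rw [Finset.sum_range_succ' (fun k => ((N : ℝ) + ((k : ℝ) + 1) * lam) * a k N * x ^ (k + 1)) N]
  rw [Finset.sum_range_succ (fun k => ((k : ℝ) + 1) * lam * a k N * x ^ (k + 2)) N]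
  rw [Finset.sum_range_succ (fun k => a k (N + 1) * x ^ (k + 1)) (N + 1)]
  rw [Finset.sum_range_succ' (fun k => a k (N + 1) * x ^ (k + 1)) N]
  have hmid : ∀ k ∈ Finset.range N,
      a (k + 1) (N + 1) * x ^ (k + 1 + 1)
      = ((N : ℝ) + ((k : ℝ) + 1 + 1) * lam) * a (k + 1) N * x ^ (k + 1 + 1)
        - ((k : ℝ) + 1) * lam * a k N * x ^ (k + 2) := by
    intro k hk
    have hk' : k < N := Finset.mem_range.mp hk
    have h := haMid N hN (k + 2) (by omega) (by omega)
    simp only [Nat.add_sub_cancel, show k + 2 - 2 = k from rfl] at h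
    push_cast at h
    rw [h]; ring
  rw [Finset.sum_congr rfl hmid, Finset.sum_sub_distrib]
  have htop := haTop N hN
  have hbot := haBot N hN
  rw [htop, hbot]
  push_cast
  ring

/-- Let `λ ≠ 0` be real, `F t = 1/((1+t)^λ + 1)` on `(-1, ∞)`
(real power), and let `a k N` denote the recursively defined coefficients
`a_k(N; λ)`.  Then for every `N ≥ 1`, `F` is `N` times differentiable on
`(-1, ∞)` and `F^(N)(t) = ((-1)^N λ/(1+t)^N) · Σ_{i=1}^{N+1} a_{i-1}(N;λ) F(t)^i`. -/
theorem boole_higher_derivative (lam : ℝ) (hlam : lam ≠ 0) (F : ℝ → ℝ)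
    (hF : ∀ t : ℝ, -1 < t → F t = 1 / ((1 + t) ^ lam + 1))
    (a : ℕ → ℕ → ℝ)
    (ha00 : a 0 0 = 1 / lam) (ha01 : a 0 1 = 1) (ha11 : a 1 1 = -1)
    (haTop : ∀ N : ℕ, 1 ≤ N → a 0 (N + 1) = ((N : ℝ) + lam) * a 0 N)
    (haBot : ∀ N : ℕ, 1 ≤ N →
      a (N + 1) (N + 1) = -(((N : ℝ) + 1) * lam) * a N N)
    (haMid : ∀ N : ℕ, 1 ≤ N → ∀ i : ℕ, 2 ≤ i → i ≤ N + 1 →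
      a (i - 1) (N + 1) =
        -(((i : ℝ) - 1) * lam) * a (i - 2) N + ((N : ℝ) + (i : ℝ) * lam) * a (i - 1) N)
    (N : ℕ) (hN : 1 ≤ N) :
    (∀ m : ℕ, m < N → ∀ t : ℝ, -1 < t → DifferentiableAt ℝ (iteratedDeriv m F) t) ∧
    (∀ t : ℝ, -1 < t →
      iteratedDeriv N F t =
        ((-1 : ℝ) ^ N * lam / (1 + t) ^ N) *
          ∑ i ∈ Finset.Icc 1 (N + 1), a (i - 1) N * F t ^ i) := by
  -- F agrees with Gb near every point of (-1, ∞)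
  have hFeqG : ∀ t : ℝ, -1 < t → F =ᶠ[nhds t] Gb lam := by
    intro t ht
    filter_upwards [Ioi_mem_nhds ht] with s hs
    rw [hF s hs]; simp [Gb, one_div]
  have hiterFG : ∀ n : ℕ, ∀ t : ℝ, -1 < t →
      iteratedDeriv n F =ᶠ[nhds t] iteratedDeriv n (Gb lam) := by
    intro n
    induction n with
    | zero => simpa [iteratedDeriv_zero] using hFeqG
    | succ n ih =>
      intro t ht
      simpa [iteratedDeriv_succ] using (ih t ht).deriv
  -- the main formula for Gb
  have key : ∀ M : ℕ, 1 ≤ M → ∀ t : ℝ, -1 < t →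
      iteratedDeriv M (Gb lam) t = Pb lam a M t := by
    intro M hM
    induction M with
    | zero => omega
    | succ M ih =>
      rcases Nat.lt_or_ge M 1 with hM0 | hM1
      · -- M = 0 : base case N = 1
        interval_cases M
        intro t ht
        have h1t : (0:ℝ) < 1 + t := by linarith
        rw [iteratedDeriv_one, (Gb_hasDerivAt lam t ht).deriv]
        have hIcc : Finset.Icc 1 2 = ({1, 2} : Finset ℕ) := rfl
        simp only [Pb, hIcc]
        rw [Finset.sum_insert (by decide), Finset.sum_singleton]
        simp only [ha01, ha11]
        ring
      · intro t ht
        have h1t : (0:ℝ) < 1 + t := by linarith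
        have hev : iteratedDeriv M (Gb lam) =ᶠ[nhds t] Pb lam a M := by
          filter_upwards [Ioi_mem_nhds ht] with s hs using ih hM1 s hs
        rw [iteratedDeriv_succ, hev.deriv_eq, (Pb_hasDerivAt lam a M hM1 t ht).deriv]
        rw [sum_rec lam a haTop haBot haMid M hM1 (Gb lam t)]
        rfl
  -- differentiability of iterated derivatives of Gb
  have hdiffG : ∀ m : ℕ, ∀ t : ℝ, -1 < t →
      DifferentiableAt ℝ (iteratedDeriv m (Gb lam)) t := by
    intro m t ht
    cases m with
    | zero =>
      simpa [iteratedDeriv_zero] using (Gb_hasDerivAt lam t ht).differentiableAt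
    | succ m =>
      have hev : iteratedDeriv (m + 1) (Gb lam) =ᶠ[nhds t] Pb lam a (m + 1) := by
        filter_upwards [Ioi_mem_nhds ht] with s hs using key (m + 1) (by omega) s hs
      rw [hev.differentiableAt_iff]
      exact (Pb_hasDerivAt lam a (m + 1) (by omega) t ht).differentiableAt
  constructor
  · intro m _ t ht
    exact (hiterFG m t ht).differentiableAt_iff.mpr (hdiffG m t ht)
  · intro t ht
    have hFt : F t = Gb lam t := by rw [hF t ht]; simp [Gb, one_div]
    rw [(hiterFG N t ht).eq_of_nhds, key N hN t ht]
    simp only [Pb, hFt]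
end

section
/- Let λ be a nonzero real number and let a_k(N;λ) be the recursively defined coefficients. Then for all integers N ≥ 1 and 1 ≤ k ≤ N one has the summed recurrence a_k(N+1;λ) = −k·λ · Σ_{i=0}^{N−k+1} (N+(k+1)λ)_i · a_{k−1}(N−i;λ), where (x)_i denotes the falling factorial. -/
lemma descPochhammer_succ_eval_left (n : ℕ) (x : ℝ) :
    (descPochhammer ℝ (n + 1)).eval x = x * (descPochhammer ℝ n).eval (x - 1) := by
  rw [descPochhammer_succ_left]
  simp [Polynomial.eval_comp]

/-- For `λ ≠ 0` and the recursively defined coefficients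
`a_k(N;λ)`, for all `N ≥ 1` and `1 ≤ k ≤ N` one has the summed recurrence
`a_k(N+1;λ) = -kλ · Σ_{i=0}^{N-k+1} (N+(k+1)λ)_i · a_{k-1}(N-i;λ)`,
where `(x)_i` denotes the falling factorial (given by `descPochhammer`). -/
theorem boole_coeff_summed_recurrence (lam : ℝ) (hlam : lam ≠ 0)
    (a : ℕ → ℕ → ℝ)
    (ha00 : a 0 0 = 1 / lam) (ha01 : a 0 1 = 1) (ha11 : a 1 1 = -1)
    (haTop : ∀ N : ℕ, 1 ≤ N → a 0 (N + 1) = ((N : ℝ) + lam) * a 0 N)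
    (haBot : ∀ N : ℕ, 1 ≤ N →
      a (N + 1) (N + 1) = -(((N : ℝ) + 1) * lam) * a N N)
    (haMid : ∀ N : ℕ, 1 ≤ N → ∀ i : ℕ, 2 ≤ i → i ≤ N + 1 →
      a (i - 1) (N + 1) =
        -(((i : ℝ) - 1) * lam) * a (i - 2) N + ((N : ℝ) + (i : ℝ) * lam) * a (i - 1) N)
    (N k : ℕ) (hN : 1 ≤ N) (hk1 : 1 ≤ k) (hkN : k ≤ N) :
    a k (N + 1) =
      -((k : ℝ) * lam) *
        ∑ i ∈ Finset.range (N - k + 2),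
          (descPochhammer ℝ i).eval ((N : ℝ) + ((k : ℝ) + 1) * lam) * a (k - 1) (N - i) := by
  -- the basic two-term recurrence
  have hrec : ∀ M : ℕ, k ≤ M → a k (M + 1) =
      -((k : ℝ) * lam) * a (k - 1) M + ((M : ℝ) + ((k : ℝ) + 1) * lam) * a k M := by
    intro M hkM
    have h := haMid M (hk1.trans hkM) (k + 1) (by omega) (by omega)
    simpa [Nat.add_sub_cancel, Nat.succ_sub_one, Nat.add_sub_cancel_left] using h
  -- diagonal values
  have hdiag : a k k = -((k : ℝ) * lam) * a (k - 1) (k - 1) := by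
    match k, hk1 with
    | 1, _ =>
      simp only [ha11, Nat.sub_self, ha00, Nat.cast_one]
      field_simp
    | (m + 2), _ =>
      have h := haBot (m + 1) (by omega)
      show a (m + 2) (m + 2) = -(((m + 2 : ℕ) : ℝ) * lam) * a (m + 1) (m + 1)
      rw [show ((m + 2 : ℕ) : ℝ) = ((m + 1 : ℕ) : ℝ) + 1 by push_cast; ring]
      exact h
  clear haMid haBot haTop ha00 ha01 ha11 hN
  induction N, hkN using Nat.le_induction with
  | base =>
    rw [hrec k le_rfl, hdiag]
    rw [Nat.sub_self]
    rw [Finset.sum_range_succ, Finset.sum_range_succ, Finset.sum_range_zero]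
    simp only [descPochhammer_zero, descPochhammer_one, Polynomial.eval_one, Polynomial.eval_X,
      Nat.sub_zero]
    ring
  | succ M hM ih =>
    have hx : ∀ i ∈ Finset.range (M - k + 2),
        (descPochhammer ℝ (i + 1)).eval ((M : ℝ) + 1 + ((k : ℝ) + 1) * lam)
          * a (k - 1) (M + 1 - (i + 1)) =
        ((M : ℝ) + 1 + ((k : ℝ) + 1) * lam) *
          ((descPochhammer ℝ i).eval ((M : ℝ) + ((k : ℝ) + 1) * lam) * a (k - 1) (M - i)) := by
      intro i _
      rw [descPochhammer_succ_eval_left, Nat.succ_sub_succ]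
      ring_nf
    rw [hrec (M + 1) (by omega)]
    push_cast
    rw [show M + 1 - k + 2 = (M - k + 2) + 1 from by omega, Finset.sum_range_succ',
      Finset.sum_congr rfl hx, ← Finset.mul_sum, ih]
    simp only [descPochhammer_zero, Polynomial.eval_one, Nat.sub_zero, one_mul]
    ring
end

section
/- Let λ be a nonzero real number and let a_k(N;λ) be the recursively defined coefficients. Then for every integer N ≥ 1 one has the closed form a_1(N+1;λ) = −λ · Σ_{i=0}^{N} (N+2λ)_i · (N+λ−i−1)_{N−i−1}, where (x)_n denotes the falling factorial and by convention (x)_{−1} · term for i = N is interpreted via a_0(0;λ) = 1/λ, i.e. the i = N summand equals (N+2λ)_N · (1/λ). -/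
/-- For `λ ≠ 0` and the recursively defined coefficients
`a_k(N;λ)`, for every `N ≥ 1` one has the closed form
`a_1(N+1;λ) = -λ · Σ_{i=0}^{N} (N+2λ)_i · (N+λ-i-1)_{N-i-1}`,
where `(x)_n` is the falling factorial (`descPochhammer`) and the `i = N`
summand is interpreted via `a_0(0;λ) = 1/λ`, i.e. it equals `(N+2λ)_N · (1/λ)`. -/
theorem boole_coeff_a1_closed_form (lam : ℝ) (hlam : lam ≠ 0)
    (a : ℕ → ℕ → ℝ)
    (ha00 : a 0 0 = 1 / lam) (ha01 : a 0 1 = 1) (ha11 : a 1 1 = -1)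
    (haTop : ∀ N : ℕ, 1 ≤ N → a 0 (N + 1) = ((N : ℝ) + lam) * a 0 N)
    (haBot : ∀ N : ℕ, 1 ≤ N →
      a (N + 1) (N + 1) = -(((N : ℝ) + 1) * lam) * a N N)
    (haMid : ∀ N : ℕ, 1 ≤ N → ∀ i : ℕ, 2 ≤ i → i ≤ N + 1 →
      a (i - 1) (N + 1) =
        -(((i : ℝ) - 1) * lam) * a (i - 2) N + ((N : ℝ) + (i : ℝ) * lam) * a (i - 1) N)
    (N : ℕ) (hN : 1 ≤ N) :
    a 1 (N + 1) =
      -lam *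
        ∑ i ∈ Finset.range (N + 1),
          (descPochhammer ℝ i).eval ((N : ℝ) + 2 * lam) *
            (if i = N then 1 / lam
             else (descPochhammer ℝ (N - i - 1)).eval ((N : ℝ) + lam - (i : ℝ) - 1)) := by
  -- succ-left evaluation of descPochhammer
  have hdesc : ∀ (n : ℕ) (x : ℝ),
      (descPochhammer ℝ (n + 1)).eval x = x * (descPochhammer ℝ n).eval (x - 1) := by
    intro n x
    rw [descPochhammer_succ_left]
    simp [Polynomial.eval_comp]
  -- closed form for a 0
  have ha0 : ∀ M : ℕ, a 0 (M + 1) = (descPochhammer ℝ M).eval ((M : ℝ) + lam) := by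
    intro M
    induction M with
    | zero => simpa using ha01
    | succ M ih =>
      rw [haTop (M + 1) (by omega), ih, hdesc]
      push_cast
      ring_nf
  induction N, hN using Nat.le_induction with
  | base =>
    have h := haMid 1 le_rfl 2 le_rfl le_rfl
    norm_num at h
    rw [h, ha01, ha11]
    simp [Finset.sum_range_succ, descPochhammer_zero, descPochhammer_one]
    field_simp
    ring
  | succ N hN ih =>
    have h := haMid (N + 1) (by omega) 2 le_rfl (by omega)
    norm_num at h
    have hsum :
        ∑ i ∈ Finset.range (N + 1 + 1),
            (descPochhammer ℝ i).eval ((((N : ℕ) + 1 : ℕ) : ℝ) + 2 * lam) *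
              (if i = N + 1 then 1 / lam
               else (descPochhammer ℝ (N + 1 - i - 1)).eval
                 ((((N : ℕ) + 1 : ℕ) : ℝ) + lam - (i : ℝ) - 1)) =
          (descPochhammer ℝ N).eval ((N : ℝ) + lam) +
            ((N : ℝ) + 1 + 2 * lam) *
              ∑ i ∈ Finset.range (N + 1),
                (descPochhammer ℝ i).eval ((N : ℝ) + 2 * lam) *
                  (if i = N then 1 / lam
                   else (descPochhammer ℝ (N - i - 1)).eval ((N : ℝ) + lam - (i : ℝ) - 1)) := by
      rw [Finset.sum_range_succ', Finset.mul_sum]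
      have h0 : (0 : ℕ) ≠ N + 1 := by omega
      rw [add_comm]
      congr 1
      · push_cast
        simp [h0]
        ring_nf
      · apply Finset.sum_congr rfl
        intro i hi
        have hi' : i + 1 = N + 1 ↔ i = N := by omega
        have hsub : N + 1 - (i + 1) - 1 = N - i - 1 := by omega
        rw [hdesc, hsub]
        push_cast
        by_cases hcase : i = N
        · simp only [if_pos hcase]; ring
        · simp only [if_neg hcase]; ring
    rw [h, ih, ha0 N, hsum]
    ring
end

section
/- Let λ be a nonzero real number and let a_k(N;λ) be the recursively defined coefficients. Then for every integer N ≥ 2 one has a_2(N+1;λ) = 2!·λ² · Σ_{i₂=0}^{N−1} Σ_{i₁=0}^{N−i₂−1} (N+3λ)_{i₂} · (N+2λ−i₂−1)_{i₁} · (N+λ−i₂−i₁−2)_{N−i₂−i₁−2}, where summands with N−i₂−i₁−2 = −1 are interpreted via a_0(0;λ) = 1/λ (i.e. the falling-factorial factor of length −1 is replaced by 1/λ), and (x)_n denotes the falling factorial. -/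
noncomputable def a0c (lam : ℝ) : ℕ → ℝ
  | 0 => 1/lam
  | (M+1) => (descPochhammer ℝ M).eval ((M:ℝ) + lam)

noncomputable def a1c (lam : ℝ) (M : ℕ) : ℝ :=
  ∑ i ∈ Finset.range M,
    (descPochhammer ℝ i).eval ((M:ℝ) - 1 + 2*lam) * a0c lam (M - 1 - i)

noncomputable def a2c (lam : ℝ) (N : ℕ) : ℝ :=
  ∑ i ∈ Finset.range N,
    (descPochhammer ℝ i).eval ((N:ℝ) + 3*lam) * a1c lam (N - i)

lemma poch_succ_eval (n : ℕ) (x : ℝ) :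
    (descPochhammer ℝ (n+1)).eval x = x * (descPochhammer ℝ n).eval (x-1) := by
  rw [descPochhammer_succ_left]
  simp [Polynomial.eval_comp]

lemma a1c_succ (lam : ℝ) (N : ℕ) :
    a1c lam (N+2) = a0c lam (N+1) + ((N:ℝ)+1+2*lam) * a1c lam (N+1) := by
  unfold a1c
  rw [Finset.sum_range_succ']
  have hc : ∀ i ∈ Finset.range (N+1),
      (descPochhammer ℝ (i+1)).eval (((N+2:ℕ):ℝ) - 1 + 2*lam) * a0c lam (N+2-1-(i+1))
        = ((N:ℝ)+1+2*lam) *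
          ((descPochhammer ℝ i).eval (((N+1:ℕ):ℝ) - 1 + 2*lam) * a0c lam (N+1-1-i)) := by
    intro i _
    have h1 : N+2-1-(i+1) = N+1-1-i := by omega
    rw [h1, poch_succ_eval]
    push_cast
    ring_nf
  rw [Finset.sum_congr rfl hc, ← Finset.mul_sum]
  have h0 : N+2-1-0 = N+1 := by omega
  rw [h0]
  simp [descPochhammer_zero]
  ring

lemma a2c_succ (lam : ℝ) (N : ℕ) :
    a2c lam (N+1) = a1c lam (N+1) + ((N:ℝ)+1+3*lam) * a2c lam N := by
  unfold a2c
  rw [Finset.sum_range_succ']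
  have hc : ∀ i ∈ Finset.range N,
      (descPochhammer ℝ (i+1)).eval (((N+1:ℕ):ℝ) + 3*lam) * a1c lam (N+1-(i+1))
        = ((N:ℝ)+1+3*lam) *
          ((descPochhammer ℝ i).eval ((N:ℝ) + 3*lam) * a1c lam (N - i)) := by
    intro i _
    have h1 : N+1-(i+1) = N - i := by omega
    rw [h1, poch_succ_eval]
    push_cast
    ring_nf
  rw [Finset.sum_congr rfl hc, ← Finset.mul_sum]
  simp [descPochhammer_zero]
  ring

/-- For `λ ≠ 0` and the recursively defined coefficients
`a_k(N;λ)`, for every `N ≥ 2` one has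
`a_2(N+1;λ) = 2!·λ² · Σ_{i₂=0}^{N-1} Σ_{i₁=0}^{N-i₂-1}
  (N+3λ)_{i₂} · (N+2λ-i₂-1)_{i₁} · (N+λ-i₂-i₁-2)_{N-i₂-i₁-2}`,
where `(x)_n` is the falling factorial (`descPochhammer`) and summands with
`N-i₂-i₁-2 = -1` (i.e. `i₂+i₁ = N-1`) have the last factor replaced by
`a_0(0;λ) = 1/λ`. -/
theorem boole_coeff_a2_closed_form (lam : ℝ) (hlam : lam ≠ 0)
    (a : ℕ → ℕ → ℝ)
    (ha00 : a 0 0 = 1 / lam) (ha01 : a 0 1 = 1) (ha11 : a 1 1 = -1)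
    (haTop : ∀ N : ℕ, 1 ≤ N → a 0 (N + 1) = ((N : ℝ) + lam) * a 0 N)
    (haBot : ∀ N : ℕ, 1 ≤ N →
      a (N + 1) (N + 1) = -(((N : ℝ) + 1) * lam) * a N N)
    (haMid : ∀ N : ℕ, 1 ≤ N → ∀ i : ℕ, 2 ≤ i → i ≤ N + 1 →
      a (i - 1) (N + 1) =
        -(((i : ℝ) - 1) * lam) * a (i - 2) N + ((N : ℝ) + (i : ℝ) * lam) * a (i - 1) N)
    (N : ℕ) (hN : 2 ≤ N) :
    a 2 (N + 1) =
      (Nat.factorial 2 : ℝ) * lam ^ 2 *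
        ∑ i₂ ∈ Finset.range N, ∑ i₁ ∈ Finset.range (N - i₂),
          (descPochhammer ℝ i₂).eval ((N : ℝ) + 3 * lam) *
            (descPochhammer ℝ i₁).eval ((N : ℝ) + 2 * lam - (i₂ : ℝ) - 1) *
            (if i₂ + i₁ = N - 1 then 1 / lam
             else (descPochhammer ℝ (N - i₂ - i₁ - 2)).eval
                    ((N : ℝ) + lam - (i₂ : ℝ) - (i₁ : ℝ) - 2)) := by
  have L0 : ∀ M : ℕ, a 0 M = a0c lam M := by
    intro M
    induction M with
    | zero => simpa [a0c] using ha00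
    | succ M ih =>
      match M, ih with
      | 0, _ => simpa [a0c] using ha01
      | (M+1), ih =>
        rw [haTop (M+1) (by omega), ih]
        simp only [a0c, poch_succ_eval]
        push_cast
        ring
  have L1 : ∀ M : ℕ, a 1 (M+1) = -lam * a1c lam (M+1) := by
    intro M
    induction M with
    | zero =>
      rw [ha11]
      simp [a1c, a0c]
      field_simp
    | succ M ih =>
      have h := haMid (M+1) (by omega) 2 (by omega) (by omega)
      norm_num at h
      rw [h, ih, L0 (M+1)]
      have key := a1c_succ lam M
      push_cast at key ⊢
      rw [key]
      simp only [a0c]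
      push_cast
      ring
  have L2 : ∀ M : ℕ, 1 ≤ M → a 2 (M+1) = 2 * lam^2 * a2c lam M := by
    intro M hM
    induction M with
    | zero => omega
    | succ M ih =>
      match M, ih with
      | 0, _ =>
        have hb := haBot 1 le_rfl
        rw [ha11] at hb
        norm_num at hb
        rw [hb]
        simp [a2c, a1c, a0c]
        field_simp
      | (M+1), ih =>
        have h := haMid (M+2) (by omega) 3 (by omega) (by omega)
        norm_num at h
        rw [h, ih (by omega), L1 (M+1)]
        have key := a2c_succ lam (M+1)
        push_cast at key ⊢
        rw [key]
        ring
  rw [L2 N (by omega)]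
  have inner : ∀ i₂ ∈ Finset.range N,
      (∑ i₁ ∈ Finset.range (N - i₂),
          (descPochhammer ℝ i₂).eval ((N : ℝ) + 3 * lam) *
            (descPochhammer ℝ i₁).eval ((N : ℝ) + 2 * lam - (i₂ : ℝ) - 1) *
            (if i₂ + i₁ = N - 1 then 1 / lam
             else (descPochhammer ℝ (N - i₂ - i₁ - 2)).eval
                    ((N : ℝ) + lam - (i₂ : ℝ) - (i₁ : ℝ) - 2)))
        = (descPochhammer ℝ i₂).eval ((N : ℝ) + 3 * lam) * a1c lam (N - i₂) := by
    intro i₂ hi₂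
    rw [Finset.mem_range] at hi₂
    rw [a1c, Finset.mul_sum]
    apply Finset.sum_congr rfl
    intro i₁ hi₁
    rw [Finset.mem_range] at hi₁
    have hcast : ((N - i₂ : ℕ) : ℝ) = (N : ℝ) - i₂ := by
      push_cast [Nat.cast_sub (le_of_lt hi₂)]; ring
    rw [mul_assoc]
    congr 1
    have harg : ((N - i₂ : ℕ) : ℝ) - 1 + 2*lam = (N : ℝ) + 2 * lam - (i₂ : ℝ) - 1 := by
      rw [hcast]; ring
    rw [harg]
    congr 1
    by_cases hcase : i₂ + i₁ = N - 1
    · have h0 : N - i₂ - 1 - i₁ = 0 := by omega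
      rw [if_pos hcase, h0]
      rfl
    · have hpos : N - i₂ - 1 - i₁ = (N - i₂ - i₁ - 2) + 1 := by omega
      rw [if_neg hcase, hpos]
      show _ = (descPochhammer ℝ (N - i₂ - i₁ - 2)).eval (((N - i₂ - i₁ - 2 : ℕ) : ℝ) + lam)
      congr 1
      have : ((N - i₂ - i₁ - 2 : ℕ) : ℝ) = (N : ℝ) - i₂ - i₁ - 2 := by
        have hk : N - i₂ - i₁ - 2 + (i₂ + i₁ + 2) = N := by omega
        have := congrArg (Nat.cast : ℕ → ℝ) hk
        push_cast at this
        linarith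
      rw [this]; ring
  rw [Finset.sum_congr rfl inner]
  norm_num [a2c, Finset.mul_sum]
end

section
/- Let λ be a nonzero real number and let a_k(N;λ) be the recursively defined coefficients. Then for all integers N ≥ 2 and 1 ≤ j ≤ N−1 one has the explicit multiple-sum formula a_j(N;λ) = (−1)^j · j! · λ^j · Σ_{i_j=0}^{N−j} Σ_{i_{j−1}=0}^{N−j−i_j} ··· Σ_{i_1=0}^{N−j−i_j−···−i_2} (N+(j+1)λ−1)_{i_j} · (N+jλ−i_j−2)_{i_{j−1}} ··· (N+2λ−i_j−···−i_2−j)_{i_1} · (N+λ−i_j−···−i_1−j−1)_{N−i_j−···−i_1−j−1}, where (x)_n denotes the falling factorial, the m-th factor from the left (for 1 ≤ m ≤ j) is (N+(j+2−m)λ−i_j−···−i_{j−m+2}−(m−1))_{i_{j−m+1}}, and summands in which the last index N−i_j−···−i_1−j−1 equals −1 are interpreted via a_0(0;λ) = 1/λ (the last falling-factorial factor is replaced by 1/λ). -/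
open Finset

noncomputable def booleS (lam : ℝ) (N j : ℕ) : ℝ :=
  ∑ v ∈ (Fintype.piFinset fun _ : Fin j => Finset.range (N - j + 1)).filter
      (fun v => ∑ m, v m ≤ N - j),
    (∏ m : Fin j,
      (descPochhammer ℝ (v m)).eval
        ((N : ℝ) + ((j : ℝ) + 1 - ((m : ℕ) : ℝ)) * lam
          - (∑ m' ∈ Finset.Iio m, ((v m' : ℕ) : ℝ)) - (((m : ℕ) : ℝ) + 1))) *
    (if (∑ m, v m) = N - j then 1 / lam
     else (descPochhammer ℝ (N - j - (∑ m, v m) - 1)).eval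
            ((N : ℝ) + lam - (((∑ m, v m : ℕ)) : ℝ) - (j : ℝ) - 1))

lemma fin_Iio_succ {n : ℕ} (m : Fin n) :
    Finset.Iio (Fin.succ m) = insert 0 ((Finset.Iio m).map (Fin.succEmb n)) := by
  ext x
  simp only [Finset.mem_Iio, Finset.mem_insert, Finset.mem_map, Fin.coe_succEmb]
  constructor
  · intro hx
    rcases Fin.eq_zero_or_eq_succ x with rfl | ⟨y, rfl⟩
    · exact Or.inl rfl
    · exact Or.inr ⟨y, Fin.succ_lt_succ_iff.mp hx, rfl⟩
  · rintro (rfl | ⟨y, hy, rfl⟩)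
    · exact Fin.succ_pos m
    · exact Fin.succ_lt_succ_iff.mpr hy

lemma sum_Iio_succ_cast {n : ℕ} (a : Fin (n + 1) → ℕ) (m : Fin n) :
    ∑ m' ∈ Finset.Iio (Fin.succ m), ((a m' : ℕ) : ℝ)
      = (a 0 : ℝ) + ∑ m' ∈ Finset.Iio m, ((a m'.succ : ℕ) : ℝ) := by
  rw [fin_Iio_succ, Finset.sum_insert, Finset.sum_map]
  · rfl
  · simp only [Finset.mem_map, Fin.coe_succEmb]
    rintro ⟨y, -, hy⟩
    exact Fin.succ_ne_zero y hy

lemma booleS_zero (lam : ℝ) (N : ℕ) :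
    booleS lam N 0 = if 0 = N then 1 / lam
      else (descPochhammer ℝ (N - 1)).eval ((N : ℝ) + lam - 1) := by
  unfold booleS
  rw [show (Fintype.piFinset fun _ : Fin 0 => Finset.range (N - 0 + 1)).filter
        (fun v => ∑ m, v m ≤ N - 0) = {fun _ => 0} by
    ext v
    simp [eq_iff_true_of_subsingleton]]
  simp

lemma booleS_diag (lam : ℝ) (N : ℕ) : booleS lam N N = 1 / lam := by
  unfold booleS
  rw [show (Fintype.piFinset fun _ : Fin N => Finset.range (N - N + 1)).filter
        (fun v => ∑ m, v m ≤ N - N) = {fun _ => 0} by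
    ext v
    simp only [Nat.sub_self, Finset.mem_filter, Fintype.mem_piFinset, Finset.mem_range,
      Nat.lt_one_iff, Finset.mem_singleton, Nat.le_zero]
    constructor
    · rintro ⟨h, -⟩
      funext m
      have := h m
      omega
    · rintro rfl
      simp]
  simp

lemma booleS_succ (lam : ℝ) (N j : ℕ) (h : j + 1 ≤ N) :
    booleS lam N (j + 1) = ∑ v0 ∈ Finset.range (N - (j + 1) + 1),
      (descPochhammer ℝ v0).eval ((N : ℝ) + ((j : ℝ) + 2) * lam - 1)
        * booleS lam (N - 1 - v0) j := by
  conv_lhs => rw [booleS]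
  rw [← Finset.sum_fiberwise_of_maps_to (t := Finset.range (N - (j + 1) + 1))
    (g := fun v : Fin (j + 1) → ℕ => v 0) ?_]
  swap
  · intro v hv
    simp only [Finset.mem_filter, Fintype.mem_piFinset] at hv
    exact hv.1 0
  refine Finset.sum_congr rfl fun v0 hv0 => ?_
  rw [booleS, Finset.mul_sum]
  have hv0' : v0 ≤ N - (j + 1) := Nat.lt_succ_iff.mp (Finset.mem_range.mp hv0)
  refine Finset.sum_nbij' (fun v => Fin.tail v) (fun w => Fin.cons v0 w) ?_ ?_ ?_ ?_ ?_
  · intro v hv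
    simp only [Finset.mem_filter, Fintype.mem_piFinset, Finset.mem_range] at hv
    obtain ⟨⟨hmem, hsum⟩, h0⟩ := hv
    have hsplit : ∑ m : Fin (j + 1), v m = v 0 + ∑ m : Fin j, v m.succ :=
      Fin.sum_univ_succ v
    simp only [Finset.mem_filter, Fintype.mem_piFinset, Finset.mem_range]
    constructor
    · intro m
      have hm : v m.succ ≤ ∑ m : Fin j, v m.succ :=
        Finset.single_le_sum (f := fun m : Fin j => v m.succ) (fun _ _ => Nat.zero_le _)
          (Finset.mem_univ m)
      show Fin.tail v m < N - 1 - v0 - j + 1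
      unfold Fin.tail
      omega
    · show ∑ m : Fin j, Fin.tail v m ≤ N - 1 - v0 - j
      unfold Fin.tail
      omega
  · intro w hw
    simp only [Finset.mem_filter, Fintype.mem_piFinset, Finset.mem_range] at hw
    obtain ⟨hmem, hsum⟩ := hw
    simp only [Finset.mem_filter, Fintype.mem_piFinset, Finset.mem_range]
    refine ⟨⟨fun m => ?_, ?_⟩, Fin.cons_zero _ _⟩
    · rcases Fin.eq_zero_or_eq_succ m with rfl | ⟨y, rfl⟩
      · simp only [Fin.cons_zero]
        omega
      · simp only [Fin.cons_succ]
        have := Nat.lt_succ_iff.mp (hmem y)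
        omega
    · rw [Fin.sum_univ_succ]
      simp only [Fin.cons_zero, Fin.cons_succ]
      omega
  · intro v hv
    simp only [Finset.mem_filter] at hv
    rw [← hv.2]
    exact Fin.cons_self_tail v
  · intro w _
    exact Fin.tail_cons _ _
  · intro v hv
    simp only [Finset.mem_filter, Fintype.mem_piFinset, Finset.mem_range] at hv
    obtain ⟨⟨hmem, hsum⟩, h0⟩ := hv
    have hsplit : ∑ m : Fin (j + 1), v m = v 0 + ∑ m : Fin j, v m.succ :=
      Fin.sum_univ_succ v
    have hv00 : v 0 = v0 := h0
    have hvle : v 0 ≤ N - (j + 1) := by omega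
    have hc1 : ((N - 1 - v0 : ℕ) : ℝ) = (N : ℝ) - 1 - (v0 : ℝ) := by
      push_cast [Nat.cast_sub (by omega : v0 ≤ N - 1), Nat.cast_sub (by omega : 1 ≤ N)]
      ring
    have htail : ∑ m : Fin j, Fin.tail v m = (∑ m : Fin (j + 1), v m) - v0 := by
      unfold Fin.tail
      omega
    -- main term computation
    rw [Fin.prod_univ_succ]
    have hfirst :
        (descPochhammer ℝ (v 0)).eval
          ((N : ℝ) + (((j : ℕ) + 1 : ℕ) + 1 - (((0 : Fin (j + 1)) : ℕ) : ℝ)) * lam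
            - (∑ m' ∈ Finset.Iio (0 : Fin (j + 1)), ((v m' : ℕ) : ℝ))
            - ((((0 : Fin (j + 1)) : ℕ) : ℝ) + 1))
          = (descPochhammer ℝ v0).eval ((N : ℝ) + ((j : ℝ) + 2) * lam - 1) := by
      rw [hv00]
      congr 1
      have hIio : ∑ m' ∈ Finset.Iio (0 : Fin (j + 1)), ((v m' : ℕ) : ℝ) = 0 :=
        Finset.sum_eq_zero fun x hx => absurd (Finset.mem_Iio.mp hx) (Fin.not_lt_zero x)
      rw [hIio]
      push_cast [Fin.val_zero]
      ring
    rw [hfirst]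
    simp only [show Fin.tail v = fun m => v m.succ from rfl]
    have hmid : ∀ m : Fin j, m ∈ Finset.univ →
        (descPochhammer ℝ (v m.succ)).eval
          ((N : ℝ) + (((j + 1 : ℕ) : ℝ) + 1 - ((m.succ : ℕ) : ℝ)) * lam
            - (∑ m' ∈ Finset.Iio (Fin.succ m), ((v m' : ℕ) : ℝ)) - (((m.succ : ℕ) : ℝ) + 1))
        = (descPochhammer ℝ (v m.succ)).eval
          (((N - 1 - v0 : ℕ) : ℝ) + ((j : ℝ) + 1 - ((m : ℕ) : ℝ)) * lam
            - (∑ m' ∈ Finset.Iio m, ((v m'.succ : ℕ) : ℝ)) - (((m : ℕ) : ℝ) + 1)) := by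
      intro m _
      rw [sum_Iio_succ_cast v m, hv00, hc1]
      congr 1
      push_cast [Fin.val_succ]
      ring
    rw [Finset.prod_congr rfl hmid]
    have hcond : (∑ m : Fin (j + 1), v m = N - (j + 1))
        ↔ (∑ m : Fin j, v m.succ = N - 1 - v0 - j) := by omega
    have hidx : N - (j + 1) - (∑ m : Fin (j + 1), v m) - 1
        = N - 1 - v0 - j - (∑ m : Fin j, v m.succ) - 1 := by omega
    have hpt : (N : ℝ) + lam - ((∑ m : Fin (j + 1), v m : ℕ) : ℝ) - ((j + 1 : ℕ) : ℝ) - 1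
        = ((N - 1 - v0 : ℕ) : ℝ) + lam - ((∑ m : Fin j, v m.succ : ℕ) : ℝ) - (j : ℝ) - 1 := by
      rw [hc1, hsplit, hv00]
      push_cast
      ring
    have hif : (if (∑ m : Fin (j + 1), v m) = N - (j + 1) then 1 / lam
         else (descPochhammer ℝ (N - (j + 1) - (∑ m : Fin (j + 1), v m) - 1)).eval
                ((N : ℝ) + lam - ((∑ m : Fin (j + 1), v m : ℕ) : ℝ) - ((j + 1 : ℕ) : ℝ) - 1))
        = (if (∑ m : Fin j, v m.succ) = N - 1 - v0 - j then 1 / lam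
         else (descPochhammer ℝ (N - 1 - v0 - j - (∑ m : Fin j, v m.succ) - 1)).eval
                (((N - 1 - v0 : ℕ) : ℝ) + lam - ((∑ m : Fin j, v m.succ : ℕ) : ℝ) - (j : ℝ) - 1)) := by
      split_ifs with h1 h2
      · rfl
      · omega
      · omega
      · rw [hidx, hpt]
    rw [hif]
    ring

lemma booleS_rec (lam : ℝ) (N j' : ℕ) (h2 : j' + 1 ≤ N) :
    booleS lam (N + 1) (j' + 1)
      = booleS lam N j' + ((N : ℝ) + (((j' : ℝ) + 1) + 1) * lam) * booleS lam N (j' + 1) := by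
  rw [booleS_succ lam (N + 1) j' (by omega),
    show N + 1 - (j' + 1) + 1 = (N - j') + 1 from by omega,
    Finset.sum_range_succ']
  have hterm : ∀ i ∈ Finset.range (N - j'),
      (descPochhammer ℝ (i + 1)).eval (((N + 1 : ℕ) : ℝ) + ((j' : ℝ) + 2) * lam - 1)
        * booleS lam (N + 1 - 1 - (i + 1)) j'
      = ((N : ℝ) + ((j' : ℝ) + 2) * lam) *
        ((descPochhammer ℝ i).eval ((N : ℝ) + ((j' : ℝ) + 2) * lam - 1)
          * booleS lam (N - 1 - i) j') := by
    intro i _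
    rw [show N + 1 - 1 - (i + 1) = N - 1 - i from by omega, descPochhammer_succ_left]
    simp only [Polynomial.eval_mul, Polynomial.eval_X, Polynomial.eval_comp,
      Polynomial.eval_sub, Polynomial.eval_one]
    push_cast
    ring
  rw [Finset.sum_congr rfl hterm, ← Finset.mul_sum,
    show N - j' = N - (j' + 1) + 1 from by omega, ← booleS_succ lam N j' (by omega)]
  rw [show N + 1 - 1 - 0 = N from by omega]
  simp only [descPochhammer_zero, Polynomial.eval_one, one_mul]
  ring

lemma booleS_zero_rec (lam : ℝ) (N : ℕ) (h : 1 ≤ N) :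
    booleS lam (N + 1) 0 = ((N : ℝ) + lam) * booleS lam N 0 := by
  rw [booleS_zero, booleS_zero, if_neg (by omega), if_neg (by omega)]
  rw [show (N + 1 - 1) = (N - 1) + 1 from by omega, descPochhammer_succ_left]
  simp only [Polynomial.eval_mul, Polynomial.eval_X, Polynomial.eval_comp,
    Polynomial.eval_sub, Polynomial.eval_one]
  have h1 : ((N + 1 : ℕ) : ℝ) + lam - 1 = (N : ℝ) + lam := by push_cast; ring
  rw [h1]

lemma boole_key (lam : ℝ) (hlam : lam ≠ 0) (a : ℕ → ℕ → ℝ)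
    (ha01 : a 0 1 = 1) (ha11 : a 1 1 = -1)
    (haTop : ∀ N : ℕ, 1 ≤ N → a 0 (N + 1) = ((N : ℝ) + lam) * a 0 N)
    (haBot : ∀ N : ℕ, 1 ≤ N →
      a (N + 1) (N + 1) = -(((N : ℝ) + 1) * lam) * a N N)
    (haMid : ∀ N : ℕ, 1 ≤ N → ∀ i : ℕ, 2 ≤ i → i ≤ N + 1 →
      a (i - 1) (N + 1) =
        -(((i : ℝ) - 1) * lam) * a (i - 2) N + ((N : ℝ) + (i : ℝ) * lam) * a (i - 1) N) :
    ∀ N, 1 ≤ N → ∀ j, j ≤ N →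
      a j N = (-1 : ℝ) ^ j * (j.factorial : ℝ) * lam ^ j * booleS lam N j := by
  intro N
  induction N with
  | zero => omega
  | succ N ih =>
    intro _ j hj
    rcases Nat.eq_zero_or_pos N with rfl | hN1
    · interval_cases j
      · rw [ha01, booleS_zero, if_neg (by omega)]
        simp
      · rw [ha11, booleS_diag]
        field_simp
        norm_num [Nat.factorial]
    · rcases Nat.eq_zero_or_pos j with rfl | hj1
      · rw [haTop N hN1, ih hN1 0 (by omega), booleS_zero_rec lam N hN1]
        ring
      rcases eq_or_lt_of_le hj with rfl | hjlt
      · rw [haBot N hN1, ih hN1 N le_rfl, booleS_diag lam N, booleS_diag lam (N + 1),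
          Nat.factorial_succ]
        push_cast
        field_simp
        ring
      · have hmid := haMid N hN1 (j + 1) (by omega) (by omega)
        simp only [Nat.add_sub_cancel] at hmid
        rw [show j + 1 - 2 = j - 1 from by omega] at hmid
        obtain ⟨j', rfl⟩ : ∃ j', j = j' + 1 := ⟨j - 1, by omega⟩
        simp only [Nat.add_sub_cancel] at hmid
        rw [hmid, ih hN1 j' (by omega), ih hN1 (j' + 1) (by omega),
          booleS_rec lam N j' (by omega), Nat.factorial_succ]
        push_cast
        ring

/-- For `λ ≠ 0` and the recursively defined coefficients
`a_k(N;λ)`, for all `N ≥ 2` and `1 ≤ j ≤ N-1` one has the explicit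
multiple-sum formula
`a_j(N;λ) = (-1)^j · j! · λ^j · Σ_{i_j=0}^{N-j} Σ_{i_{j-1}=0}^{N-j-i_j} ⋯
  Σ_{i_1=0}^{N-j-i_j-⋯-i_2} (N+(j+1)λ-1)_{i_j} (N+jλ-i_j-2)_{i_{j-1}} ⋯
  (N+2λ-i_j-⋯-i_2-j)_{i_1} · (N+λ-i_j-⋯-i_1-j-1)_{N-i_j-⋯-i_1-j-1}`.
Here the sum is encoded as the sum over all tuples `v : Fin j → ℕ`
(`v 0 = i_j, v 1 = i_{j-1}, …, v (j-1) = i_1`) with `Σ v ≤ N-j`; the `m`-th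
factor from the left (`m : Fin j` zero-based) is
`(N+(j+1-m)λ - v 0 - ⋯ - v (m-1) - (m+1))_{v m}`, and summands whose last
index `N - Σv - j - 1` equals `-1` (i.e. `Σ v = N-j`) have the last
falling-factorial factor replaced by `a_0(0;λ) = 1/λ`.  The falling
factorial `(x)_n` is `descPochhammer`. -/
theorem boole_coeff_aj_closed_form (lam : ℝ) (hlam : lam ≠ 0)
    (a : ℕ → ℕ → ℝ)
    (ha00 : a 0 0 = 1 / lam) (ha01 : a 0 1 = 1) (ha11 : a 1 1 = -1)
    (haTop : ∀ N : ℕ, 1 ≤ N → a 0 (N + 1) = ((N : ℝ) + lam) * a 0 N)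
    (haBot : ∀ N : ℕ, 1 ≤ N →
      a (N + 1) (N + 1) = -(((N : ℝ) + 1) * lam) * a N N)
    (haMid : ∀ N : ℕ, 1 ≤ N → ∀ i : ℕ, 2 ≤ i → i ≤ N + 1 →
      a (i - 1) (N + 1) =
        -(((i : ℝ) - 1) * lam) * a (i - 2) N + ((N : ℝ) + (i : ℝ) * lam) * a (i - 1) N)
    (N j : ℕ) (hN : 2 ≤ N) (hj1 : 1 ≤ j) (hjN : j ≤ N - 1) :
    a j N =
      (-1 : ℝ) ^ j * (j.factorial : ℝ) * lam ^ j *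
        ∑ v ∈ (Fintype.piFinset fun _ : Fin j => Finset.range (N - j + 1)).filter
            (fun v => ∑ m, v m ≤ N - j),
          (∏ m : Fin j,
            (descPochhammer ℝ (v m)).eval
              ((N : ℝ) + ((j : ℝ) + 1 - ((m : ℕ) : ℝ)) * lam
                - (∑ m' ∈ Finset.Iio m, ((v m' : ℕ) : ℝ)) - (((m : ℕ) : ℝ) + 1))) *
          (if (∑ m, v m) = N - j then 1 / lam
           else (descPochhammer ℝ (N - j - (∑ m, v m) - 1)).eval
                  ((N : ℝ) + lam - (((∑ m, v m : ℕ)) : ℝ) - (j : ℝ) - 1)) := by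
  have key := boole_key lam hlam a ha01 ha11 haTop haBot haMid N (by omega) j (by omega)
  rw [key, booleS]
end

section
/- Let λ be a nonzero real number, let Bl_n(λ) be the Boole numbers, Bl_n^{(i)}(λ) the higher-order Boole numbers, and a_k(N;λ) the recursively defined coefficients. Then for every integer N ≥ 1 and every integer k ≥ 0 one has Bl_{k+N}(λ) = (−1)^N · λ · Σ_{i=1}^{N+1} a_{i−1}(N;λ) · Σ_{l=0}^{k} C(k,l) · (−1)^l · (N+l−1)_l · Bl_{k−l}^{(i)}(λ), where C(k,l) is the binomial coefficient and (N+l−1)_l = (N+l−1)(N+l−2)···N is the falling factorial of length l. -/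
open Filter Finset Topology Polynomial

private lemma diffAt_iter {u : ℝ → ℝ} {U : Set ℝ} (hU : IsOpen U)
    (hu : ContDiffOn ℝ (⊤:ℕ∞) u U) {x : ℝ} (hx : x ∈ U) (n : ℕ) :
    DifferentiableAt ℝ (iteratedDeriv n u) x := by
  have heq : Set.EqOn (iteratedDerivWithin n u U) (iteratedDeriv n u) U := by
    intro y hy
    rw [iteratedDerivWithin_eq_iteratedFDerivWithin, iteratedDeriv_eq_iteratedFDeriv,
      iteratedFDerivWithin_of_isOpen n hU hy]
  have h2 : DifferentiableWithinAt ℝ (iteratedDerivWithin n u U) U x :=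
    hu.differentiableOn_iteratedDerivWithin (by exact_mod_cast ENat.coe_lt_top n)
      hU.uniqueDiffOn x hx
  have h3 : DifferentiableAt ℝ (iteratedDerivWithin n u U) x :=
    h2.differentiableAt (hU.mem_nhds hx)
  refine h3.congr_of_eventuallyEq ?_
  filter_upwards [hU.mem_nhds hx] with y hy using (heq hy).symm

private lemma hasDerivAt_iter {u : ℝ → ℝ} {U : Set ℝ} (hU : IsOpen U)
    (hu : ContDiffOn ℝ (⊤:ℕ∞) u U) {x : ℝ} (hx : x ∈ U) (n : ℕ) :
    HasDerivAt (iteratedDeriv n u) (iteratedDeriv (n+1) u x) x := by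
  rw [iteratedDeriv_succ]
  exact (diffAt_iter hU hu hx n).hasDerivAt

private lemma iter_sum {ι : Type} (s : Finset ι) (F : ι → ℝ → ℝ) {U : Set ℝ} (hU : IsOpen U)
    (hF : ∀ i ∈ s, ContDiffOn ℝ (⊤:ℕ∞) (F i) U) (k : ℕ) :
    ∀ x ∈ U, iteratedDeriv k (fun t => ∑ i ∈ s, F i t) x = ∑ i ∈ s, iteratedDeriv k (F i) x := by
  induction k with
  | zero => intro x hx; simp
  | succ k ih =>
    intro x hx
    rw [iteratedDeriv_succ]
    have hev : iteratedDeriv k (fun t => ∑ i ∈ s, F i t) =ᶠ[𝓝 x]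
        fun y => ∑ i ∈ s, iteratedDeriv k (F i) y := by
      filter_upwards [hU.mem_nhds hx] with y hy using ih y hy
    rw [hev.deriv_eq]
    have hD : HasDerivAt (fun y => ∑ i ∈ s, iteratedDeriv k (F i) y)
        (∑ i ∈ s, iteratedDeriv (k+1) (F i) x) x :=
      HasDerivAt.fun_sum fun i hi => hasDerivAt_iter hU (hF i hi) hx k
    rw [hD.deriv]

private lemma iter_cmul (c : ℝ) {g : ℝ → ℝ} {U : Set ℝ} (hU : IsOpen U)
    (hg : ContDiffOn ℝ (⊤:ℕ∞) g U) (k : ℕ) :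
    ∀ x ∈ U, iteratedDeriv k (fun t => c * g t) x = c * iteratedDeriv k g x := by
  induction k with
  | zero => intro x hx; simp
  | succ k ih =>
    intro x hx
    rw [iteratedDeriv_succ]
    have hev : iteratedDeriv k (fun t => c * g t) =ᶠ[𝓝 x]
        fun y => c * iteratedDeriv k g y := by
      filter_upwards [hU.mem_nhds hx] with y hy using ih y hy
    rw [hev.deriv_eq]
    have hD : HasDerivAt (fun y => c * iteratedDeriv k g y) (c * iteratedDeriv (k+1) g x) x :=
      (hasDerivAt_iter hU hg hx k).const_mul c
    rw [hD.deriv, iteratedDeriv_succ]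

private lemma iter_leibniz {u v : ℝ → ℝ} {U : Set ℝ} (hU : IsOpen U)
    (hu : ContDiffOn ℝ (⊤:ℕ∞) u U) (hv : ContDiffOn ℝ (⊤:ℕ∞) v U) (k : ℕ) :
    ∀ x ∈ U, iteratedDeriv k (fun t => u t * v t) x =
      ∑ l ∈ range (k+1), (k.choose l : ℝ) * (iteratedDeriv l u x * iteratedDeriv (k - l) v x) := by
  induction k with
  | zero => intro x hx; simp
  | succ k ih =>
    intro x hx
    rw [iteratedDeriv_succ]
    have hev : iteratedDeriv k (fun t => u t * v t) =ᶠ[𝓝 x]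
        fun y => ∑ l ∈ range (k+1),
          (k.choose l : ℝ) * (iteratedDeriv l u y * iteratedDeriv (k - l) v y) := by
      filter_upwards [hU.mem_nhds hx] with y hy using ih y hy
    rw [hev.deriv_eq]
    have hD : HasDerivAt
        (fun y => ∑ l ∈ range (k+1),
          (k.choose l : ℝ) * (iteratedDeriv l u y * iteratedDeriv (k - l) v y))
        (∑ l ∈ range (k+1), (k.choose l : ℝ) *
          (iteratedDeriv (l+1) u x * iteratedDeriv (k-l) v x
            + iteratedDeriv l u x * iteratedDeriv (k-l+1) v x)) x :=
      HasDerivAt.fun_sum fun l _ =>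
        (((hasDerivAt_iter hU hu hx l).mul (hasDerivAt_iter hU hv hx (k-l)))).const_mul _
    rw [hD.deriv]
    have hre : ∀ l ∈ range (k+1), (k.choose l : ℝ) *
          (iteratedDeriv (l+1) u x * iteratedDeriv (k-l) v x
            + iteratedDeriv l u x * iteratedDeriv (k-l+1) v x)
        = (k.choose l : ℝ) * (iteratedDeriv l u x * iteratedDeriv (k+1-l) v x)
          + (k.choose l : ℝ) * (iteratedDeriv (l+1) u x * iteratedDeriv (k-l) v x) := by
      intro l hl
      have : k + 1 - l = (k - l) + 1 := by
        rw [Finset.mem_range] at hl; omega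
      rw [this]; ring
    rw [Finset.sum_congr rfl hre, Finset.sum_add_distrib]
    exact (Finset.sum_choose_succ_mul
      (fun i j => iteratedDeriv i u x * iteratedDeriv j v x) k).symm

private lemma f_smooth (lam : ℝ) :
    ContDiffOn ℝ (⊤:ℕ∞) (fun t : ℝ => 1 / ((1 + t) ^ lam + 1)) (Set.Ioi (-1:ℝ)) := by
  intro t ht
  have h1 : (0:ℝ) < 1 + t := by simp only [Set.mem_Ioi] at ht; linarith
  have hb : ContDiffAt ℝ (⊤:ℕ∞) (fun t : ℝ => (1 + t) ^ lam) t :=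
    ContDiffAt.rpow_const_of_ne (contDiffAt_const.add contDiffAt_id) h1.ne'
  have hd : ContDiffAt ℝ (⊤:ℕ∞) (fun t : ℝ => (1 + t) ^ lam + 1) t := hb.add contDiffAt_const
  have hpos : (1 + t) ^ lam + 1 ≠ 0 := by positivity
  have := hd.inv hpos
  simp only [one_div]
  exact this.contDiffWithinAt

private lemma fpow_smooth (lam : ℝ) (i : ℕ) :
    ContDiffOn ℝ (⊤:ℕ∞) (fun t : ℝ => (1 / ((1 + t) ^ lam + 1)) ^ i) (Set.Ioi (-1:ℝ)) :=
  (f_smooth lam).pow i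

private lemma zpow_smooth (m : ℕ) :
    ContDiffOn ℝ (⊤:ℕ∞) (fun t : ℝ => (1 + t) ^ (-(m:ℤ))) (Set.Ioi (-1:ℝ)) := by
  have hfun : (fun t : ℝ => (1 + t) ^ (-(m:ℤ))) = fun t : ℝ => ((1 + t) ^ m)⁻¹ := by
    funext t; rw [zpow_neg, zpow_natCast]
  rw [hfun]
  intro t ht
  have h1 : (0:ℝ) < 1 + t := by simp only [Set.mem_Ioi] at ht; linarith
  have : ContDiffAt ℝ (⊤:ℕ∞) (fun t : ℝ => ((1 + t) ^ m)⁻¹) t :=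
    ((contDiffAt_const.add contDiffAt_id).pow m).inv (by positivity)
  exact this.contDiffWithinAt

private lemma f_hasDerivAt (lam : ℝ) {t : ℝ} (ht : t ∈ Set.Ioi (-1:ℝ)) :
    HasDerivAt (fun t : ℝ => 1 / ((1 + t) ^ lam + 1))
      (-lam * ((1+t)⁻¹ *
        (1 / ((1 + t) ^ lam + 1) - (1 / ((1 + t) ^ lam + 1)) ^ 2))) t := by
  have h1 : (0:ℝ) < 1 + t := by simp only [Set.mem_Ioi] at ht; linarith
  have hg : HasDerivAt (fun s : ℝ => (1 + s) ^ lam) (lam * (1 + t) ^ (lam - 1)) t := by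
    have h := Real.hasDerivAt_rpow_const (x := 1 + t) (p := lam) (Or.inl h1.ne')
    have h2 := h.comp t ((hasDerivAt_id t).const_add 1)
    simpa [Function.comp_def] using h2
  have hD : (1 + t) ^ lam + 1 ≠ 0 := by positivity
  have hd : HasDerivAt (fun s : ℝ => (1 + s) ^ lam + 1) (lam * (1 + t) ^ (lam - 1)) t :=
    hg.add_const 1
  have hinv : HasDerivAt (fun s : ℝ => ((1 + s) ^ lam + 1)⁻¹) _ t := hd.inv hD
  have hfun : (fun s : ℝ => ((1 + s) ^ lam + 1)⁻¹)
      = fun s : ℝ => 1 / ((1 + s) ^ lam + 1) := by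
    funext s; rw [one_div]
  rw [hfun] at hinv
  convert hinv using 1
  have hsub : (1 + t) ^ (lam - 1) = (1 + t) ^ lam / (1 + t) := by
    rw [Real.rpow_sub h1, Real.rpow_one]
  rw [hsub]
  field_simp
  ring

private lemma fpow_hasDerivAt (lam : ℝ) (i : ℕ) (hi : 1 ≤ i) {t : ℝ}
    (ht : t ∈ Set.Ioi (-1:ℝ)) :
    HasDerivAt (fun t : ℝ => (1 / ((1 + t) ^ lam + 1)) ^ i)
      (-((i:ℝ) * lam) * ((1+t)⁻¹ *
        ((1 / ((1 + t) ^ lam + 1)) ^ i - (1 / ((1 + t) ^ lam + 1)) ^ (i+1)))) t := by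
  obtain ⟨j, rfl⟩ : ∃ j, i = j + 1 := ⟨i - 1, by omega⟩
  have h : HasDerivAt (fun t : ℝ => (1 / ((1 + t) ^ lam + 1)) ^ (j+1)) _ t :=
    (f_hasDerivAt lam ht).pow (j+1)
  convert h using 1
  push_cast
  ring

private lemma zpow_iter_at_zero (m : ℤ) (l : ℕ) :
    iteratedDeriv l (fun t : ℝ => (1 + t) ^ m) 0 = ∏ j ∈ range l, ((m:ℝ) - j) := by
  have h := iteratedDeriv_comp_const_add l (fun x : ℝ => x ^ m) 1
  have h2 : iteratedDeriv l (fun t : ℝ => (1 + t) ^ m) 0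
      = iteratedDeriv l (fun x : ℝ => x ^ m) (1 + 0) := by
    exact congrFun h 0
  rw [h2, iteratedDeriv_eq_iterate, iter_deriv_zpow]
  norm_num

private lemma desc_eq_prod (N l : ℕ) :
    (descPochhammer ℝ l).eval ((N:ℝ) + (l:ℝ) - 1) = ∏ j ∈ range l, ((N:ℝ) + (j:ℝ)) := by
  induction l with
  | zero => simp
  | succ l ih =>
    rw [descPochhammer_succ_left, prod_range_succ]
    push_cast
    rw [Polynomial.eval_mul, Polynomial.eval_X, Polynomial.eval_comp, Polynomial.eval_sub,
      Polynomial.eval_X, Polynomial.eval_one]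
    have : (N:ℝ) + ((l:ℝ) + 1) - 1 - 1 = (N:ℝ) + (l:ℝ) - 1 := by ring
    rw [this, ih]
    ring

private lemma neg_prod_eq (N l : ℕ) :
    (∏ j ∈ range l, (-(N:ℝ) - j))
      = (-1:ℝ)^l * (descPochhammer ℝ l).eval ((N:ℝ) + (l:ℝ) - 1) := by
  rw [desc_eq_prod]
  have : ∀ j ∈ range l, (-(N:ℝ) - j) = (-1) * ((N:ℝ) + (j:ℝ)) := by
    intro j _; ring
  rw [Finset.prod_congr rfl this, Finset.prod_mul_distrib]
  simp

private lemma sum_id (lam : ℝ) (N : ℕ) (a' c : ℕ → ℝ)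
    (h0 : c 0 = ((N:ℝ) + lam) * a' 0)
    (hmid : ∀ j, 1 ≤ j → j ≤ N →
      c j = -((j:ℝ)*lam) * a' (j-1) + ((N:ℝ)+((j:ℝ)+1)*lam) * a' j)
    (htop : c (N+1) = -(((N:ℝ)+1)*lam) * a' N) (y w : ℝ) :
    ∑ j ∈ range (N+2), c j * (w * y^(j+1))
      = ∑ j ∈ range (N+1), a' j *
          (((N:ℝ) + ((j:ℝ)+1)*lam) * (w * y^(j+1)) - ((j:ℝ)+1)*lam * (w * y^(j+2))) := by
  have hc : ∀ j ∈ range (N+2), c j * (w * y^(j+1)) =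
      (if j = 0 then 0 else -((j:ℝ)*lam) * a' (j-1)) * (w * y^(j+1))
      + (if j = N+1 then 0 else ((N:ℝ)+((j:ℝ)+1)*lam) * a' j) * (w * y^(j+1)) := by
    intro j hj
    rw [Finset.mem_range] at hj
    rcases Nat.eq_zero_or_pos j with rfl | hj1
    · have hne : (0:ℕ) ≠ N + 1 := by omega
      rw [if_pos rfl, if_neg hne, h0]
      push_cast; ring
    · rcases eq_or_lt_of_le (by omega : j ≤ N + 1) with hje | hjl
      · subst hje
        rw [if_neg (by omega), if_pos rfl, htop]
        have : N + 1 - 1 = N := by omega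
        rw [this]
        push_cast; ring
      · rw [if_neg (by omega), if_neg (by omega), hmid j hj1 (by omega)]
        ring
  rw [Finset.sum_congr rfl hc, Finset.sum_add_distrib]
  have e1 : ∑ j ∈ range (N+2),
      (if j = 0 then 0 else -((j:ℝ)*lam) * a' (j-1)) * (w * y^(j+1))
      = ∑ j ∈ range (N+1), -(((j:ℝ)+1)*lam) * a' j * (w * y^(j+2)) := by
    rw [Finset.sum_range_succ' (fun j => (if j = 0 then 0 else -((j:ℝ)*lam) * a' (j-1)) * (w * y^(j+1))) (N+1)]
    norm_num
  have e2 : ∑ j ∈ range (N+2),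
      (if j = N+1 then 0 else ((N:ℝ)+((j:ℝ)+1)*lam) * a' j) * (w * y^(j+1))
      = ∑ j ∈ range (N+1), ((N:ℝ)+((j:ℝ)+1)*lam) * a' j * (w * y^(j+1)) := by
    rw [Finset.sum_range_succ, if_pos rfl, zero_mul, add_zero]
    refine Finset.sum_congr rfl fun j hj => ?_
    rw [Finset.mem_range] at hj
    rw [if_neg (by omega)]
  rw [e1, e2, ← Finset.sum_add_distrib]
  exact Finset.sum_congr rfl fun j _ => by ring

private lemma key (lam : ℝ) (hlam : lam ≠ 0) (a : ℕ → ℕ → ℝ)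
    (ha00 : a 0 0 = 1 / lam) (ha01 : a 0 1 = 1) (ha11 : a 1 1 = -1)
    (haTop : ∀ N : ℕ, 1 ≤ N → a 0 (N + 1) = ((N : ℝ) + lam) * a 0 N)
    (haBot : ∀ N : ℕ, 1 ≤ N → a (N + 1) (N + 1) = -(((N : ℝ) + 1) * lam) * a N N)
    (haMid : ∀ N : ℕ, 1 ≤ N → ∀ i : ℕ, 2 ≤ i → i ≤ N + 1 →
      a (i - 1) (N + 1) =
        -(((i : ℝ) - 1) * lam) * a (i - 2) N + ((N : ℝ) + (i : ℝ) * lam) * a (i - 1) N) :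
    ∀ N : ℕ, ∀ t ∈ Set.Ioi (-1:ℝ),
      iteratedDeriv N (fun t : ℝ => 1 / ((1 + t) ^ lam + 1)) t
        = (-1:ℝ)^N * lam * ∑ j ∈ range (N+1),
            a j N * ((1 + t) ^ (-((N:ℕ):ℤ)) * (1 / ((1 + t) ^ lam + 1)) ^ (j+1)) := by
  have hrec0 : ∀ N : ℕ, a 0 (N+1) = ((N:ℝ)+lam) * a 0 N := by
    intro N
    rcases Nat.eq_zero_or_pos N with rfl | h
    · rw [ha01, ha00]; push_cast; field_simp; ring
    · exact haTop N h
  have hrecTop : ∀ N : ℕ, a (N+1) (N+1) = -(((N:ℝ)+1)*lam) * a N N := by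
    intro N
    rcases Nat.eq_zero_or_pos N with rfl | h
    · rw [ha11, ha00]; push_cast; field_simp; ring
    · exact haBot N h
  have hrecMid : ∀ N : ℕ, ∀ j, 1 ≤ j → j ≤ N →
      a j (N+1) = -((j:ℝ)*lam) * a (j-1) N + ((N:ℝ)+((j:ℝ)+1)*lam) * a j N := by
    intro N j hj1 hjN
    have hN : 1 ≤ N := le_trans hj1 hjN
    have h := haMid N hN (j+1) (by omega) (by omega)
    have e1 : j + 1 - 1 = j := by omega
    have e2 : j + 1 - 2 = j - 1 := by omega
    rw [e1, e2] at h
    rw [h]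
    push_cast
    ring
  intro N
  induction N with
  | zero =>
    intro t ht
    rw [iteratedDeriv_zero]
    simp [ha00]
    rw [← mul_assoc, mul_inv_cancel₀ hlam, one_mul]
  | succ N ih =>
    intro t ht
    have h1 : (0:ℝ) < 1 + t := by simp only [Set.mem_Ioi] at ht; linarith
    have hne : (1:ℝ) + t ≠ 0 := h1.ne'
    rw [iteratedDeriv_succ]
    have hev : iteratedDeriv N (fun t : ℝ => 1 / ((1 + t) ^ lam + 1)) =ᶠ[𝓝 t]
        fun y => (-1:ℝ)^N * lam * ∑ j ∈ range (N+1),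
          a j N * ((1 + y) ^ (-((N:ℕ):ℤ)) * (1 / ((1 + y) ^ lam + 1)) ^ (j+1)) := by
      filter_upwards [isOpen_Ioi.mem_nhds ht] with y hy using ih y hy
    rw [hev.deriv_eq]
    have hw : HasDerivAt (fun y : ℝ => (1+y) ^ (-((N:ℕ):ℤ)))
        (((-((N:ℕ):ℤ)):ℝ) * (1+t) ^ (-((N:ℕ):ℤ) - 1)) t := by
      have h := hasDerivAt_zpow (-((N:ℕ):ℤ)) (1+t) (Or.inl hne)
      have h2 := h.comp t ((hasDerivAt_id t).const_add 1)
      simpa [Function.comp_def] using h2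
    have hD : HasDerivAt
        (fun y => (-1:ℝ)^N * lam * ∑ j ∈ range (N+1),
          a j N * ((1 + y) ^ (-((N:ℕ):ℤ)) * (1 / ((1 + y) ^ lam + 1)) ^ (j+1)))
        ((-1:ℝ)^N * lam * ∑ j ∈ range (N+1),
          a j N * ((((-((N:ℕ):ℤ)):ℝ) * (1+t) ^ (-((N:ℕ):ℤ) - 1))
              * (1 / ((1 + t) ^ lam + 1)) ^ (j+1)
            + (1+t) ^ (-((N:ℕ):ℤ)) *
              (-(((j+1:ℕ):ℝ) * lam) * ((1+t)⁻¹ *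
                ((1 / ((1 + t) ^ lam + 1)) ^ (j+1)
                  - (1 / ((1 + t) ^ lam + 1)) ^ (j+1+1)))))) t := by
      refine HasDerivAt.const_mul _ (HasDerivAt.fun_sum fun j hj => ?_)
      exact (hw.mul (fpow_hasDerivAt lam (j+1) (by omega) ht)).const_mul (a j N)
    rw [hD.deriv]
    -- now the algebraic identity
    set y := 1 / ((1 + t) ^ lam + 1) with hy
    set w := (1+t) ^ (-(((N+1:ℕ)):ℤ)) with hwdef
    have hw1 : (1+t) ^ (-((N:ℕ):ℤ) - 1) = w := by
      rw [hwdef]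
      congr 1
      push_cast
      ring
    have hw2 : (1+t) ^ (-((N:ℕ):ℤ)) * (1+t)⁻¹ = w := by
      rw [hwdef, ← zpow_neg_one (1+t), ← zpow_add₀ hne]
      congr 1
      push_cast
      ring
    have hterm : ∀ j ∈ range (N+1),
        a j N * ((((-((N:ℕ):ℤ)):ℝ) * (1+t) ^ (-((N:ℕ):ℤ) - 1)) * y ^ (j+1)
          + (1+t) ^ (-((N:ℕ):ℤ)) *
            (-(((j+1:ℕ):ℝ) * lam) * ((1+t)⁻¹ * (y ^ (j+1) - y ^ (j+1+1)))))
        = -(a j N * ((((N:ℝ) + ((j:ℝ)+1)*lam) * (w * y^(j+1))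
            - ((j:ℝ)+1)*lam * (w * y^(j+2))))) := by
      intro j hj
      rw [hw1]
      push_cast
      linear_combination (a j N * (-(((j:ℝ)+1))*lam) * (y^(j+1) - y^(j+2))) * hw2
    rw [Finset.sum_congr rfl hterm]
    have hid := sum_id lam N (fun j => a j N) (fun j => a j (N+1))
      (hrec0 N) (hrecMid N) (hrecTop N) y w
    rw [Finset.sum_neg_distrib]
    rw [← hid]
    ring

/-- (Theorem 3 of the paper.)  Let `λ ≠ 0`.  The Boole numbers
`Bl n` are defined by the EGF identity `1/((1+t)^λ+1) = Σ Bl n · tⁿ/n!`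
(equivalently, `Bl n` is the `n`-th derivative at `0` of `t ↦ 1/((1+t)^λ+1)`,
with `(1+t)^λ = exp(λ log(1+t))` the real power), and the higher-order Boole
numbers `Blr r n` by `(1/((1+t)^λ+1))^r = Σ Blr r n · tⁿ/n!` for `r ≥ 1`.
With the recursively defined coefficients `a_k(N;λ)`, for all `N ≥ 1` and
`k ≥ 0`:
`Bl (k+N) = (-1)^N λ Σ_{i=1}^{N+1} a_{i-1}(N;λ)
  Σ_{l=0}^{k} C(k,l) (-1)^l (N+l-1)_l · Blr i (k-l)`,
where `(N+l-1)_l` is the falling factorial (`descPochhammer`). -/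
theorem boole_number_identity (lam : ℝ) (hlam : lam ≠ 0)
    (Bl : ℕ → ℝ)
    (hBl : ∀ n : ℕ, iteratedDeriv n (fun t : ℝ => 1 / ((1 + t) ^ lam + 1)) 0 = Bl n)
    (Blr : ℕ → ℕ → ℝ)
    (hBlr : ∀ r : ℕ, 1 ≤ r → ∀ n : ℕ,
      iteratedDeriv n (fun t : ℝ => (1 / ((1 + t) ^ lam + 1)) ^ r) 0 = Blr r n)
    (a : ℕ → ℕ → ℝ)
    (ha00 : a 0 0 = 1 / lam) (ha01 : a 0 1 = 1) (ha11 : a 1 1 = -1)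
    (haTop : ∀ N : ℕ, 1 ≤ N → a 0 (N + 1) = ((N : ℝ) + lam) * a 0 N)
    (haBot : ∀ N : ℕ, 1 ≤ N →
      a (N + 1) (N + 1) = -(((N : ℝ) + 1) * lam) * a N N)
    (haMid : ∀ N : ℕ, 1 ≤ N → ∀ i : ℕ, 2 ≤ i → i ≤ N + 1 →
      a (i - 1) (N + 1) =
        -(((i : ℝ) - 1) * lam) * a (i - 2) N + ((N : ℝ) + (i : ℝ) * lam) * a (i - 1) N)
    (N : ℕ) (hN : 1 ≤ N) (k : ℕ) :
    Bl (k + N) =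
      (-1 : ℝ) ^ N * lam *
        ∑ i ∈ Finset.Icc 1 (N + 1), a (i - 1) N *
          ∑ l ∈ Finset.range (k + 1),
            (k.choose l : ℝ) * (-1 : ℝ) ^ l *
              (descPochhammer ℝ l).eval ((N : ℝ) + (l : ℝ) - 1) * Blr i (k - l) := by
  have h0mem : (0:ℝ) ∈ Set.Ioi (-1:ℝ) := by norm_num
  rw [← hBl (k+N)]
  have hsplit : ∀ m : ℕ, iteratedDeriv (m + N) (fun t : ℝ => 1 / ((1 + t) ^ lam + 1))
      = iteratedDeriv m (iteratedDeriv N (fun t : ℝ => 1 / ((1 + t) ^ lam + 1))) := by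
    intro m
    induction m with
    | zero => simp
    | succ m ih => rw [Nat.succ_add, iteratedDeriv_succ, ih, ← iteratedDeriv_succ]
  rw [hsplit k]
  have hkey := key lam hlam a ha00 ha01 ha11 haTop haBot haMid N
  have hev : iteratedDeriv N (fun t : ℝ => 1 / ((1 + t) ^ lam + 1)) =ᶠ[𝓝 (0:ℝ)]
      fun y => (-1:ℝ)^N * lam * ∑ j ∈ range (N+1),
        a j N * ((1 + y) ^ (-((N:ℕ):ℤ)) * (1 / ((1 + y) ^ lam + 1)) ^ (j+1)) := by
    filter_upwards [isOpen_Ioi.mem_nhds h0mem] with y hy using hkey y hy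
  rw [Filter.EventuallyEq.iteratedDeriv_eq k hev]
  have hsmoothF : ∀ j : ℕ, ContDiffOn ℝ (⊤:ℕ∞) (fun t : ℝ =>
      a j N * ((1 + t) ^ (-((N:ℕ):ℤ)) * (1 / ((1 + t) ^ lam + 1)) ^ (j+1)))
      (Set.Ioi (-1:ℝ)) :=
    fun j => contDiffOn_const.mul ((zpow_smooth N).mul (fpow_smooth lam (j+1)))
  rw [iter_cmul ((-1:ℝ)^N * lam) isOpen_Ioi
    (ContDiffOn.sum fun j _ => hsmoothF j) k 0 h0mem]
  rw [iter_sum (range (N+1)) _ isOpen_Ioi (fun j _ => hsmoothF j) k 0 h0mem]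
  have hu0 : ∀ l : ℕ, iteratedDeriv l (fun t : ℝ => (1+t) ^ (-((N:ℕ):ℤ))) 0
      = (-1:ℝ)^l * (descPochhammer ℝ l).eval ((N:ℝ) + (l:ℝ) - 1) := by
    intro l
    rw [zpow_iter_at_zero]
    push_cast
    rw [neg_prod_eq]
  have hterm : ∀ j : ℕ, iteratedDeriv k (fun t : ℝ =>
      a j N * ((1 + t) ^ (-((N:ℕ):ℤ)) * (1 / ((1 + t) ^ lam + 1)) ^ (j+1))) 0
      = a j N * ∑ l ∈ range (k+1),
          (k.choose l : ℝ) * (-1:ℝ)^l *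
            (descPochhammer ℝ l).eval ((N:ℝ) + (l:ℝ) - 1) * Blr (j+1) (k - l) := by
    intro j
    rw [iter_cmul (a j N) isOpen_Ioi ((zpow_smooth N).mul (fpow_smooth lam (j+1))) k 0 h0mem]
    rw [iter_leibniz isOpen_Ioi (zpow_smooth N) (fpow_smooth lam (j+1)) k 0 h0mem]
    congr 1
    refine Finset.sum_congr rfl fun l _ => ?_
    rw [hu0 l, hBlr (j+1) (by omega) (k-l)]
    ring
  rw [Finset.sum_congr rfl fun j _ => hterm j]
  congr 1
  have hIcc : ∑ i ∈ Finset.Icc 1 (N + 1), a (i - 1) N *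
      ∑ l ∈ Finset.range (k + 1),
        (k.choose l : ℝ) * (-1 : ℝ) ^ l *
          (descPochhammer ℝ l).eval ((N : ℝ) + (l : ℝ) - 1) * Blr i (k - l)
      = ∑ j ∈ range (N+1), a ((j+1) - 1) N *
          ∑ l ∈ Finset.range (k + 1),
            (k.choose l : ℝ) * (-1 : ℝ) ^ l *
              (descPochhammer ℝ l).eval ((N : ℝ) + (l : ℝ) - 1) * Blr (j+1) (k - l) := by
    rw [← Finset.Ico_add_one_right_eq_Icc, Finset.sum_Ico_eq_sum_range]
    refine Finset.sum_congr (by norm_num) fun j _ => ?_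
    rw [Nat.add_comm 1 j]
  rw [hIcc]
  simp only [Nat.add_sub_cancel]
end

section
/- Let λ be a nonzero real number, let Bl_k(λ) be the Boole numbers, E_n the Euler numbers, and S₂(n,k) the Stirling numbers of the second kind. Then for every integer n ≥ 0 one has (1/2)·λ^n·E_n = Σ_{k=0}^{n} Bl_k(λ)·S₂(n,k). -/
open Set Finset Real Filter

/-- Bell/Stirling-type recursion. -/
private def Sr : ℕ → ℕ → ℝ
  | 0, 0 => 1
  | 0, _+1 => 0
  | _+1, 0 => 0
  | n+1, k+1 => (k+1) * Sr n (k+1) + Sr n k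

private lemma Sr_zero_of_lt : ∀ n k : ℕ, n < k → Sr n k = 0
  | 0, _+1, _ => rfl
  | n+1, k+1, h => by
      have h1 : n < k + 1 := by omega
      have h2 : n < k := by omega
      simp [Sr, Sr_zero_of_lt n (k+1) h1, Sr_zero_of_lt n k h2]

private lemma iteratedDeriv_cmul {n : ℕ} {f : ℝ → ℝ} (hf : ContDiff ℝ n f) (c x) :
    iteratedDeriv n (fun z => c * f z) x = c * iteratedDeriv n f x := by
  simp only [← iteratedDerivWithin_univ]
  exact iteratedDerivWithin_const_mul (mem_univ x) uniqueDiffOn_univ c hf.contDiffWithinAt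

private lemma iteratedDeriv_add' {n : ℕ} {f g : ℝ → ℝ} (hf : ContDiff ℝ n f)
    (hg : ContDiff ℝ n g) (x) :
    iteratedDeriv n (fun z => f z + g z) x = iteratedDeriv n f x + iteratedDeriv n g x := by
  simp only [← iteratedDerivWithin_univ]
  have := iteratedDerivWithin_add (𝕜 := ℝ) (f := f) (g := g) (mem_univ x) uniqueDiffOn_univ
    hf.contDiffWithinAt hg.contDiffWithinAt
  simpa [Pi.add_def] using this

private lemma hasDerivAt_iteratedDeriv_of_isOpen {f : ℝ → ℝ} {U : Set ℝ} (hU : IsOpen U)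
    (hf : ContDiffOn ℝ ⊤ f U) {x : ℝ} (hx : x ∈ U) (n : ℕ) :
    HasDerivAt (iteratedDeriv n f) (iteratedDeriv (n+1) f x) x := by
  have eqon : ∀ m : ℕ, ∀ y ∈ U, iteratedDerivWithin m f U y = iteratedDeriv m f y := by
    intro m
    induction m with
    | zero => intro y hy; simp
    | succ m ih =>
      intro y hy
      rw [iteratedDerivWithin_succ, derivWithin_of_isOpen hU hy,
        iteratedDeriv_succ]
      apply Filter.EventuallyEq.deriv_eq
      filter_upwards [hU.mem_nhds hy] with z hz using ih z hz
  have hlt : (n : WithTop ℕ∞) < ⊤ := by exact_mod_cast WithTop.coe_lt_top _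
  have hdiff : DifferentiableAt ℝ (iteratedDerivWithin n f U) x :=
    ((hf.differentiableOn_iteratedDerivWithin hlt hU.uniqueDiffOn) x hx).differentiableAt
      (hU.mem_nhds hx)
  have heq : iteratedDeriv n f =ᶠ[nhds x] iteratedDerivWithin n f U := by
    filter_upwards [hU.mem_nhds hx] with y hy using (eqon n y hy).symm
  have hd2 : DifferentiableAt ℝ (iteratedDeriv n f) x := hdiff.congr_of_eventuallyEq heq
  rw [iteratedDeriv_succ]
  exact hd2.hasDerivAt

/-- Let `λ ≠ 0`.  The Boole numbers `Bl n` are defined by the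
EGF identity `1/((1+t)^λ+1) = Σ Bl n · tⁿ/n!` (so `Bl n` is the `n`-th
derivative at `0` of `t ↦ 1/((1+t)^λ+1)`, real power), the Euler numbers `E n`
by `2/(eᵗ+1) = Σ E n · tⁿ/n!`, and the Stirling numbers of the second kind
`S2 n k` by `(eᵗ-1)ᵏ/k! = Σ S2 n k · tⁿ/n!`.  Then for every `n ≥ 0`:
`(1/2)·λⁿ·E n = Σ_{k=0}^{n} Bl k · S2 n k`. -/
theorem boole_euler_stirling2 (lam : ℝ) (hlam : lam ≠ 0)
    (Bl : ℕ → ℝ)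
    (hBl : ∀ n : ℕ, iteratedDeriv n (fun t : ℝ => 1 / ((1 + t) ^ lam + 1)) 0 = Bl n)
    (E : ℕ → ℝ)
    (hE : ∀ n : ℕ, iteratedDeriv n (fun t : ℝ => 2 / (Real.exp t + 1)) 0 = E n)
    (S2 : ℕ → ℕ → ℝ)
    (hS2 : ∀ n k : ℕ,
      iteratedDeriv n (fun t : ℝ => (Real.exp t - 1) ^ k / (k.factorial : ℝ)) 0 = S2 n k)
    (n : ℕ) :
    (1 / 2 : ℝ) * lam ^ n * E n = ∑ k ∈ Finset.range (n + 1), Bl k * S2 n k := by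
  set f : ℝ → ℝ := fun s => 1 / ((1 + s) ^ lam + 1) with hf_def
  -- smoothness of f on `Ioi (-1)`
  have hfU : ContDiffOn ℝ ⊤ f (Ioi (-1 : ℝ)) := by
    intro s hs
    have hs1 : (0 : ℝ) < 1 + s := by have := mem_Ioi.mp hs; linarith
    have h1 : ContDiffAt ℝ ⊤ (fun s : ℝ => (1 + s) ^ lam) s := by
      have hr : ContDiffAt ℝ ⊤ (fun x : ℝ => x ^ lam) (1 + s) :=
        Real.contDiffAt_rpow_const_of_ne (ne_of_gt hs1)
      exact hr.comp s (contDiffAt_const.add contDiffAt_id)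
    have hden : ((1 + s) ^ lam + 1 : ℝ) ≠ 0 := by
      have := Real.rpow_pos_of_pos hs1 lam
      positivity
    exact (contDiffAt_const.div (h1.add contDiffAt_const) hden).contDiffWithinAt
  -- the key Faà di Bruno style identity
  have key : ∀ m : ℕ, ∀ t : ℝ,
      iteratedDeriv m (fun u => f (Real.exp u - 1)) t
        = ∑ k ∈ Finset.range (m + 1),
            iteratedDeriv k f (Real.exp t - 1) * (Sr m k * Real.exp (k * t)) := by
    intro m
    induction m with
    | zero => intro t; simp [Sr]
    | succ m ih =>
      intro t
      have hfn : iteratedDeriv m (fun u => f (Real.exp u - 1))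
          = fun t => ∑ k ∈ Finset.range (m + 1),
              iteratedDeriv k f (Real.exp t - 1) * (Sr m k * Real.exp (k * t)) := funext ih
      rw [iteratedDeriv_succ, hfn]
      have hterm : ∀ k ∈ Finset.range (m + 1),
          HasDerivAt (fun t : ℝ =>
              iteratedDeriv k f (Real.exp t - 1) * (Sr m k * Real.exp (k * t)))
            (iteratedDeriv (k+1) f (Real.exp t - 1) * Real.exp t * (Sr m k * Real.exp (k * t))
              + iteratedDeriv k f (Real.exp t - 1) * (Sr m k * ((k : ℝ) * Real.exp (k * t)))) t := by
        intro k _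
        have hg : HasDerivAt (fun t : ℝ => Real.exp t - 1) (Real.exp t) t :=
          (Real.hasDerivAt_exp t).sub_const 1
        have hmem : Real.exp t - 1 ∈ Ioi (-1 : ℝ) := by
          have := Real.exp_pos t
          simp only [Set.mem_Ioi]; linarith
        have h1 : HasDerivAt (fun t : ℝ => iteratedDeriv k f (Real.exp t - 1))
            (iteratedDeriv (k+1) f (Real.exp t - 1) * Real.exp t) t :=
          by have h0 := hasDerivAt_iteratedDeriv_of_isOpen isOpen_Ioi hfU hmem k; exact h0.comp t hg
        have h2 : HasDerivAt (fun t : ℝ => Sr m k * Real.exp ((k : ℝ) * t))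
            (Sr m k * ((k : ℝ) * Real.exp ((k : ℝ) * t))) t := by
          have h3 : HasDerivAt (fun t : ℝ => (k : ℝ) * t) (k : ℝ) t := by
            simpa using (hasDerivAt_id t).const_mul (k : ℝ)
          have h4 := h3.exp
          have h5 := h4.const_mul (Sr m k)
          simpa [mul_comm] using h5
        exact h1.mul h2
      rw [(HasDerivAt.fun_sum hterm).deriv]
      -- algebraic reindexing
      have hsplit : ∀ k : ℕ, Sr (m+1) k
          = (k : ℝ) * Sr m k + (if k = 0 then 0 else Sr m (k-1)) := by
        intro k
        match k with
        | 0 => simp [Sr]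
        | k+1 => push_cast [Sr]; simp
      calc
        ∑ k ∈ Finset.range (m + 1),
            (iteratedDeriv (k+1) f (Real.exp t - 1) * Real.exp t * (Sr m k * Real.exp (k * t))
              + iteratedDeriv k f (Real.exp t - 1) * (Sr m k * ((k : ℝ) * Real.exp (k * t))))
          = (∑ k ∈ Finset.range (m + 1),
              iteratedDeriv k f (Real.exp t - 1) * (((k : ℝ) * Sr m k) * Real.exp (k * t)))
            + ∑ k ∈ Finset.range (m + 1),
              iteratedDeriv (k+1) f (Real.exp t - 1) * (Sr m k * Real.exp (((k:ℝ)+1) * t)) := by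
            rw [← Finset.sum_add_distrib]
            refine Finset.sum_congr rfl fun k _ => ?_
            rw [show ((k:ℝ)+1) * t = (k:ℝ) * t + t by ring, Real.exp_add]
            ring
        _ = ∑ k ∈ Finset.range (m + 2),
              iteratedDeriv k f (Real.exp t - 1) * (Sr (m+1) k * Real.exp (k * t)) := by
            have e1 : ∑ k ∈ Finset.range (m + 2),
                iteratedDeriv k f (Real.exp t - 1) * (Sr (m+1) k * Real.exp (k * t))
              = ∑ k ∈ Finset.range (m + 2),
                (iteratedDeriv k f (Real.exp t - 1)
                    * (((k : ℝ) * Sr m k) * Real.exp (k * t))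
                  + iteratedDeriv k f (Real.exp t - 1)
                    * ((if k = 0 then (0:ℝ) else Sr m (k-1)) * Real.exp (k * t))) := by
              refine Finset.sum_congr rfl fun k _ => ?_
              rw [hsplit k]; ring
            rw [e1, Finset.sum_add_distrib]
            congr 1
            · -- first sums: drop top index
              rw [Finset.sum_range_succ (n := m+1), Sr_zero_of_lt m (m+1) (by omega)]
              simp
            · -- second sums: shift index
              rw [Finset.sum_range_succ' (fun k => iteratedDeriv k f (Real.exp t - 1) * ((if k = 0 then (0:ℝ) else Sr m (k-1)) * Real.exp ((k:ℝ) * t))) (m+1)]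
              rw [if_pos rfl]
              simp only [Nat.add_sub_cancel, mul_zero, zero_mul, add_zero]
              refine Finset.sum_congr rfl fun k _ => ?_
              rw [if_neg k.succ_ne_zero]
              push_cast
              ring
      done
  -- evaluate the key identity at 0
  have hmem0 : ∀ k : ℕ, (k : ℝ) * (0:ℝ) = 0 := by intro k; ring
  have key0 : iteratedDeriv n (fun u => f (Real.exp u - 1)) 0
      = ∑ k ∈ Finset.range (n + 1), Bl k * Sr n k := by
    rw [key n 0]
    refine Finset.sum_congr rfl fun k _ => ?_
    simp only [mul_zero, Real.exp_zero, mul_one, sub_self]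
    rw [hBl k]
  -- identify Sr with S2
  have hG : ∀ k : ℕ, ContDiff ℝ ⊤ (fun t : ℝ => (Real.exp t - 1) ^ k / (k.factorial : ℝ)) := by
    intro k
    exact ((Real.contDiff_exp.sub contDiff_const).pow k).div_const _
  have hS2Sr : ∀ m k : ℕ, S2 m k = Sr m k := by
    have hrec : ∀ m k : ℕ, S2 (m+1) (k+1) = ((k:ℝ)+1) * S2 m (k+1) + S2 m k := by
      intro m k
      have hder : deriv (fun t : ℝ => (Real.exp t - 1) ^ (k+1) / ((k+1).factorial : ℝ))
          = fun t => ((k:ℝ)+1) * ((Real.exp t - 1) ^ (k+1) / ((k+1).factorial : ℝ))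
              + (Real.exp t - 1) ^ k / (k.factorial : ℝ) := by
        funext t
        have h1 : HasDerivAt (fun t : ℝ => (Real.exp t - 1) ^ (k+1) / ((k+1).factorial : ℝ))
            ((((k:ℝ)+1) * (Real.exp t - 1) ^ k * Real.exp t) / ((k+1).factorial : ℝ)) t := by
          have := (((Real.hasDerivAt_exp t).sub_const 1).pow (k+1)).div_const
            (((k+1).factorial : ℝ))
          simpa [Nat.add_sub_cancel] using this
        rw [h1.deriv]
        have hkf : ((k+1).factorial : ℝ) = ((k:ℝ)+1) * (k.factorial : ℝ) := by
          rw [Nat.factorial_succ]; push_cast; ring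
        have hkne : (k.factorial : ℝ) ≠ 0 := by positivity
        have hk1 : ((k:ℝ)+1) ≠ 0 := by positivity
        rw [hkf]
        field_simp
        ring
      rw [← hS2 (m+1) (k+1), ← hS2 m (k+1), ← hS2 m k, iteratedDeriv_succ', hder]
      rw [iteratedDeriv_add' (n := m)
        ((contDiff_const.mul ((hG (k+1)).of_le le_top)) : ContDiff ℝ m _)
        ((hG k).of_le le_top) 0]
      rw [iteratedDeriv_cmul ((hG (k+1)).of_le le_top) (((k:ℝ)+1)) 0]
    have hzero : ∀ m : ℕ, S2 (m+1) 0 = 0 := by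
      intro m
      rw [← hS2 (m+1) 0]
      have : (fun t : ℝ => (Real.exp t - 1) ^ 0 / ((0:ℕ).factorial : ℝ)) = fun _ : ℝ => 1 := by
        funext t; simp
      rw [this, iteratedDeriv_succ']
      have h0 : deriv (fun _ : ℝ => (1:ℝ)) = fun z : ℝ => (0:ℝ) * 1 := by
        funext z; simp
      rw [h0, iteratedDeriv_cmul contDiff_const 0 0, zero_mul]
    intro m
    induction m with
    | zero =>
      intro k
      rw [← hS2 0 k, iteratedDeriv_zero]
      match k with
      | 0 => simp [Sr]
      | k+1 => simp [Sr]
    | succ m ih =>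
      intro k
      match k with
      | 0 => rw [hzero m]; simp [Sr]
      | k+1 =>
        rw [hrec m k, ih (k+1), ih k]
        show _ = Sr (m+1) (k+1)
        rw [show Sr (m+1) (k+1) = ((k:ℕ)+1) * Sr m (k+1) + Sr m k from rfl]
  -- the left-hand side
  have hcomp : (fun u : ℝ => f (Real.exp u - 1))
      = fun u : ℝ => (fun v : ℝ => 1 / (Real.exp v + 1)) (lam * u) := by
    funext u
    show 1 / ((1 + (Real.exp u - 1)) ^ lam + 1) = 1 / (Real.exp (lam * u) + 1)
    rw [show 1 + (Real.exp u - 1) = Real.exp u by ring,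
      Real.rpow_def_of_pos (Real.exp_pos u), Real.log_exp, mul_comm]
  have hF2 : ContDiff ℝ ⊤ (fun v : ℝ => 1 / (Real.exp v + 1)) := by
    apply contDiff_const.div (Real.contDiff_exp.add contDiff_const)
    intro x
    have := Real.exp_pos x
    positivity
  have hF : ContDiff ℝ ⊤ (fun v : ℝ => 2 / (Real.exp v + 1)) := by
    apply contDiff_const.div (Real.contDiff_exp.add contDiff_const)
    intro x
    have := Real.exp_pos x
    positivity
  have hLHS : iteratedDeriv n (fun u => f (Real.exp u - 1)) 0
      = lam ^ n * ((1/2 : ℝ) * E n) := by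
    rw [hcomp]
    have := congrFun (iteratedDeriv_comp_const_mul (hF2.of_le (le_top) : ContDiff ℝ n _) lam) 0
    rw [this, mul_zero]
    congr 1
    have h12 : (fun v : ℝ => 1 / (Real.exp v + 1))
        = fun v : ℝ => (1/2 : ℝ) * (2 / (Real.exp v + 1)) := by
      funext v; ring
    rw [h12, iteratedDeriv_cmul (hF.of_le (le_top) : ContDiff ℝ n _) (1/2 : ℝ) 0, hE n]
  have final : lam ^ n * ((1/2 : ℝ) * E n) = ∑ k ∈ Finset.range (n + 1), Bl k * S2 n k := by
    rw [← hLHS, key0]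
    exact Finset.sum_congr rfl fun k _ => by rw [hS2Sr n k]
  rw [← final]; ring
end

section
/- Let λ be a nonzero real number, let Bl_k^{(i)}(λ) be the higher-order Boole numbers, E_n^{(i)} the higher-order Euler numbers, and S₂(n,k) the Stirling numbers of the second kind. Then for every integer i ≥ 1 and every integer n ≥ 0 one has 2^{−i}·λ^n·E_n^{(i)} = Σ_{k=0}^{n} Bl_k^{(i)}(λ)·S₂(n,k). -/
open Real Filter Topology Set

private lemma iterderiv_eq_coeff {f : ℝ → ℝ} {p : FormalMultilinearSeries ℝ ℝ ℝ} {x : ℝ}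
    (h : HasFPowerSeriesAt f p x) (n : ℕ) :
    iteratedDeriv n f x = (n.factorial : ℝ) * p.coeff n := by
  obtain ⟨r, hr⟩ := h
  have h2 := hr.factorial_smul (1 : ℝ) n
  rw [iteratedDeriv_eq_iteratedFDeriv, ← h2, FormalMultilinearSeries.coeff, nsmul_eq_mul]
  norm_num

private lemma comp_coeff_zero_aux {r q : FormalMultilinearSeries ℝ ℝ ℝ} {n : ℕ}
    (h : ∀ k ≤ n, r.coeff k = 0) : (r.comp q).coeff n = 0 := by
  have hz : (r.comp q) n = 0 := by
    rw [FormalMultilinearSeries.comp]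
    apply Finset.sum_eq_zero
    intro c _
    have hc : r c.length = 0 :=
      FormalMultilinearSeries.coeff_eq_zero.mp (h c.length c.length_le)
    ext v
    simp [FormalMultilinearSeries.compAlongComposition_apply, hc]
  rw [FormalMultilinearSeries.coeff, hz]
  rfl

private lemma iteratedDeriv_monomial (j k : ℕ) :
    iteratedDeriv k (fun u : ℝ => u ^ j) = fun u => (j.descFactorial k : ℝ) * u ^ (j - k) := by
  induction k with
  | zero => simp
  | succ k ih =>
    rw [iteratedDeriv_succ, ih]
    funext u
    rw [deriv_const_mul _ (differentiable_pow _ _), deriv_pow_field]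
    rw [Nat.descFactorial_succ]
    push_cast
    ring_nf
    rw [Nat.sub_sub, add_comm 1 k]

private lemma iteratedDeriv_monomial_zero (j k : ℕ) :
    iteratedDeriv k (fun u : ℝ => u ^ j) 0 = if j = k then (k.factorial : ℝ) else 0 := by
  rw [iteratedDeriv_monomial]
  rcases eq_or_ne j k with rfl | hne
  · simp [Nat.descFactorial_self]
  · rcases lt_or_gt_of_ne hne with hlt | hgt
    · simp [Nat.descFactorial_eq_zero_iff_lt.mpr hlt, hne]
    · simp only []
      rw [zero_pow (Nat.sub_ne_zero_of_lt hgt)]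
      simp [hne]

private lemma iteratedDeriv_fun_add' {f g : ℝ → ℝ} {n : ℕ} (hf : ContDiff ℝ n f)
    (hg : ContDiff ℝ n g) (x : ℝ) :
    iteratedDeriv n (fun t => f t + g t) x = iteratedDeriv n f x + iteratedDeriv n g x := by
  rw [← iteratedDerivWithin_univ, ← iteratedDerivWithin_univ, ← iteratedDerivWithin_univ]
  exact iteratedDerivWithin_add (Set.mem_univ x) uniqueDiffOn_univ hf.contDiffWithinAt hg.contDiffWithinAt

private lemma iteratedDeriv_fun_const_mul {f : ℝ → ℝ} {n : ℕ} (hf : ContDiff ℝ n f) (c x : ℝ) :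
    iteratedDeriv n (fun t => c * f t) x = c * iteratedDeriv n f x := by
  rw [← iteratedDerivWithin_univ, ← iteratedDerivWithin_univ]
  exact iteratedDerivWithin_const_mul (Set.mem_univ x) uniqueDiffOn_univ c hf.contDiffWithinAt

private lemma iteratedDeriv_fun_sum' {α : Type*} (s : Finset α) {n : ℕ} (F : α → ℝ → ℝ)
    (hF : ∀ a ∈ s, ContDiff ℝ n (F a)) (x : ℝ) :
    iteratedDeriv n (fun t => ∑ a ∈ s, F a t) x = ∑ a ∈ s, iteratedDeriv n (F a) x := by
  classical
  induction s using Finset.induction with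
  | empty =>
      simp only [Finset.sum_empty]
      rw [show (fun _ : ℝ => (0:ℝ)) = fun t => (0:ℝ) * (0:ℝ) from by funext t; ring,
        iteratedDeriv_fun_const_mul contDiff_const]
      ring
  | insert a s' ha ih =>
      simp only [Finset.sum_insert ha]
      rw [iteratedDeriv_fun_add' (hF a (Finset.mem_insert_self a s'))
        (ContDiff.sum fun b hb => hF b (Finset.mem_insert_of_mem hb)),
        ih (fun b hb => hF b (Finset.mem_insert_of_mem hb))]

private lemma iteratedDerivWithin_of_isOpen' {f : ℝ → ℝ} {n : ℕ} {s : Set ℝ} (hs : IsOpen s)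
    {x : ℝ} (hx : x ∈ s) : iteratedDerivWithin n f s x = iteratedDeriv n f x := by
  rw [iteratedDerivWithin_eq_iteratedFDerivWithin, iteratedDeriv_eq_iteratedFDeriv,
    iteratedFDerivWithin_of_isOpen n hs hx]

private lemma iteratedDeriv_fun_sub_open {f g : ℝ → ℝ} {n : ℕ} {s : Set ℝ} (hs : IsOpen s)
    {x : ℝ} (hx : x ∈ s) (hf : ContDiffOn ℝ n f s) (hg : ContDiffOn ℝ n g s) :
    iteratedDeriv n (fun t => f t - g t) x = iteratedDeriv n f x - iteratedDeriv n g x := by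
  rw [← iteratedDerivWithin_of_isOpen' hs hx, ← iteratedDerivWithin_of_isOpen' (f := f) hs hx,
    ← iteratedDerivWithin_of_isOpen' (f := g) hs hx]
  exact iteratedDerivWithin_sub hx hs.uniqueDiffOn (hf.contDiffWithinAt hx) (hg.contDiffWithinAt hx)

private lemma rpow_analytic (lam : ℝ) :
    AnalyticAt ℝ (fun s : ℝ => (1 + s) ^ lam) 0 := by
  have h1 : AnalyticAt ℂ (fun z : ℂ => (1 + z) ^ (lam : ℂ)) (((0:ℝ) : ℂ)) := by
    apply (analyticAt_const.add analyticAt_id).cpow analyticAt_const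
    simp [Complex.one_mem_slitPlane]
  have h2 : AnalyticAt ℝ (fun s : ℝ => ((1 + (s : ℂ)) ^ (lam : ℂ)).re) 0 := by
    have h3 : AnalyticAt ℝ (fun s : ℝ => (1 + (s : ℂ)) ^ (lam : ℂ)) 0 :=
      (h1.restrictScalars (𝕜 := ℝ)).comp (Complex.ofRealCLM.analyticAt 0)
    exact (Complex.reCLM.analyticAt _).comp h3
  apply h2.congr
  have hev : ∀ᶠ s : ℝ in 𝓝 0, 0 < 1 + s := by
    have : Tendsto (fun s : ℝ => 1 + s) (𝓝 0) (𝓝 1) := by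
      exact (by fun_prop : Continuous fun s : ℝ => 1 + s).tendsto' 0 1 (by simp)
    exact this.eventually (eventually_gt_nhds one_pos)
  filter_upwards [hev] with s hs
  have := Complex.ofReal_cpow hs.le lam
  rw [show (1 : ℂ) + (s : ℂ) = ((1 + s : ℝ) : ℂ) by push_cast; ring, ← this, Complex.ofReal_re]

/-- Let `λ ≠ 0`.  For `r ≥ 1` the higher-order Boole numbers
`Blr r n` are defined by `(1/((1+t)^λ+1))^r = Σ Blr r n · tⁿ/n!` (real power
`(1+t)^λ = exp(λ log(1+t))`), the higher-order Euler numbers `Er i n` by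
`(2/(eᵗ+1))ⁱ = Σ Er i n · tⁿ/n!`, and the Stirling numbers of the second kind
`S2 n k` by `(eᵗ-1)ᵏ/k! = Σ S2 n k · tⁿ/n!`.  Then for all `i ≥ 1` and
`n ≥ 0`: `2⁻ⁱ·λⁿ·Er i n = Σ_{k=0}^{n} Blr i k · S2 n k`. -/
theorem higher_boole_euler_stirling2 (lam : ℝ) (hlam : lam ≠ 0)
    (Blr : ℕ → ℕ → ℝ)
    (hBlr : ∀ r : ℕ, 1 ≤ r → ∀ n : ℕ,
      iteratedDeriv n (fun t : ℝ => (1 / ((1 + t) ^ lam + 1)) ^ r) 0 = Blr r n)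
    (Er : ℕ → ℕ → ℝ)
    (hEr : ∀ i : ℕ, 1 ≤ i → ∀ n : ℕ,
      iteratedDeriv n (fun t : ℝ => (2 / (Real.exp t + 1)) ^ i) 0 = Er i n)
    (S2 : ℕ → ℕ → ℝ)
    (hS2 : ∀ n k : ℕ,
      iteratedDeriv n (fun t : ℝ => (Real.exp t - 1) ^ k / (k.factorial : ℝ)) 0 = S2 n k)
    (i : ℕ) (hi : 1 ≤ i) (n : ℕ) :
    (2 : ℝ) ^ (-(i : ℤ)) * lam ^ n * Er i n =
      ∑ k ∈ Finset.range (n + 1), Blr i k * S2 n k := by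
  classical
  set ψ : ℝ → ℝ := fun t => Real.exp t - 1 with hψdef
  have hψ_an : AnalyticAt ℝ ψ 0 := analyticAt_rexp.sub analyticAt_const
  have hψ0 : ψ 0 = 0 := by simp [hψdef]
  set f : ℝ → ℝ := fun s => (1 / ((1 + s) ^ lam + 1)) ^ i with hfdef
  have hf_an : AnalyticAt ℝ f 0 := by
    apply AnalyticAt.pow
    apply analyticAt_const.div ((rpow_analytic lam).add analyticAt_const)
    norm_num [Real.one_rpow]
  obtain ⟨p, hp⟩ := id hf_an
  obtain ⟨q, hq⟩ := id hψ_an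
  have cBlr : ∀ k : ℕ, Blr i k = (k.factorial : ℝ) * p.coeff k := by
    intro k
    rw [← hBlr i hi k]
    exact iterderiv_eq_coeff hp k
  -- the Taylor polynomial of f at 0
  set P : ℝ → ℝ := fun u => ∑ k ∈ Finset.range (n+1), p.coeff k * u ^ k with hPdef
  have hP_cd : ∀ m : ℕ, ContDiff ℝ m P :=
    fun m => ContDiff.sum fun k _ => by exact contDiff_const.mul (contDiff_id.pow k)
  have hP_an : AnalyticAt ℝ P 0 :=
    Finset.analyticAt_fun_sum _ fun k _ => analyticAt_const.mul ((analyticAt_id).pow k)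
  have hPd : ∀ k ≤ n, iteratedDeriv k P 0 = Blr i k := by
    intro k hk
    rw [hPdef]
    rw [iteratedDeriv_fun_sum' (Finset.range (n+1)) (fun j => fun u : ℝ => p.coeff j * u ^ j)
      (fun j _ => by exact contDiff_const.mul (contDiff_id.pow j)) 0]
    have e : ∀ j ∈ Finset.range (n+1), iteratedDeriv k (fun u : ℝ => p.coeff j * u ^ j) 0
        = if j = k then p.coeff j * (k.factorial : ℝ) else 0 := by
      intro j _
      rw [iteratedDeriv_fun_const_mul (show ContDiff ℝ k fun u : ℝ => u ^ j from by
        exact contDiff_id.pow j) _ 0, iteratedDeriv_monomial_zero,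
        mul_ite, mul_zero]
    rw [Finset.sum_congr rfl e, Finset.sum_ite_eq' (Finset.range (n+1)) k
      (fun j => p.coeff j * (k.factorial : ℝ)),
      if_pos (Finset.mem_range.mpr (Nat.lt_succ_of_le hk)), cBlr k]
    ring
  -- the remainder and its power series
  have hh_an : AnalyticAt ℝ (fun u => f u - P u) 0 := hf_an.sub hP_an
  obtain ⟨r, hr⟩ := id hh_an
  have hrc : ∀ k ≤ n, r.coeff k = 0 := by
    intro k hk
    have e1 : iteratedDeriv k (fun u => f u - P u) 0 = (k.factorial : ℝ) * r.coeff k :=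
      iterderiv_eq_coeff hr k
    have e2 : iteratedDeriv k (fun u => f u - P u) 0
        = iteratedDeriv k f 0 - iteratedDeriv k P 0 :=
      iteratedDeriv_fun_sub_open (isOpen_analyticAt ℝ f) hf_an
        (fun x hx => (hx : AnalyticAt ℝ f x).contDiffAt.contDiffWithinAt)
        ((hP_cd k).contDiffOn)
    have e3 : iteratedDeriv k f 0 = Blr i k := hBlr i hi k
    have e4 : (k.factorial : ℝ) * r.coeff k = 0 := by
      rw [← e1, e2, e3, hPd k hk, sub_self]
    have hkf : (k.factorial : ℝ) ≠ 0 := Nat.cast_ne_zero.mpr k.factorial_ne_zero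
    exact (mul_eq_zero.mp e4).resolve_left hkf
  -- compose with ψ
  have hr' : HasFPowerSeriesAt (fun u => f u - P u) r (ψ 0) := by rw [hψ0]; exact hr
  have hcomp : HasFPowerSeriesAt ((fun u => f u - P u) ∘ ψ) (r.comp q) 0 := hr'.comp hq
  have hzero : iteratedDeriv n ((fun u => f u - P u) ∘ ψ) 0 = 0 := by
    rw [iterderiv_eq_coeff hcomp n, comp_coeff_zero_aux hrc, mul_zero]
  have hfψ_an : AnalyticAt ℝ (fun t => f (ψ t)) 0 := by
    have h5 := hf_an
    rw [← hψ0] at h5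
    exact h5.comp hψ_an
  have hPψ_cd : ContDiff ℝ n (fun t => P (ψ t)) :=
    (hP_cd n).comp (Real.contDiff_exp.sub contDiff_const)
  have key : iteratedDeriv n (fun t => f (ψ t)) 0 = iteratedDeriv n (fun t => P (ψ t)) 0 := by
    have e := iteratedDeriv_fun_sub_open (isOpen_analyticAt ℝ (fun t => f (ψ t)))
      (hfψ_an : (0:ℝ) ∈ {x | AnalyticAt ℝ (fun t => f (ψ t)) x})
      (fun x hx => (hx : AnalyticAt ℝ (fun t => f (ψ t)) x).contDiffAt.contDiffWithinAt)
      hPψ_cd.contDiffOn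
    have e' : (fun t => f (ψ t) - P (ψ t)) = (fun u => f u - P u) ∘ ψ := rfl
    rw [e', hzero] at e
    linarith
  -- compute the right-hand side
  have hterm_cd : ∀ k : ℕ, ContDiff ℝ n (fun t : ℝ => (Real.exp t - 1) ^ k / (k.factorial : ℝ)) :=
    fun k => ((Real.contDiff_exp.sub contDiff_const).pow k).div_const _
  have hRHS : ∑ k ∈ Finset.range (n + 1), Blr i k * S2 n k
      = iteratedDeriv n (fun t => P (ψ t)) 0 := by
    have e1 : ∀ k ∈ Finset.range (n+1), Blr i k * S2 n k
        = iteratedDeriv n (fun t : ℝ =>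
          Blr i k * ((Real.exp t - 1) ^ k / (k.factorial : ℝ))) 0 := by
      intro k _
      rw [← hS2 n k, iteratedDeriv_fun_const_mul (hterm_cd k)]
    rw [Finset.sum_congr rfl e1,
      ← iteratedDeriv_fun_sum' (Finset.range (n+1))
        (fun k => fun t : ℝ => Blr i k * ((Real.exp t - 1) ^ k / (k.factorial : ℝ)))
        (fun k _ => by exact contDiff_const.mul (hterm_cd k)) 0]
    congr 1
    funext t
    rw [hPdef]
    apply Finset.sum_congr rfl
    intro k _
    rw [cBlr k]
    have hkf : (k.factorial : ℝ) ≠ 0 := Nat.cast_ne_zero.mpr k.factorial_ne_zero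
    show (k.factorial : ℝ) * p.coeff k * ((Real.exp t - 1) ^ k / (k.factorial : ℝ))
        = p.coeff k * (ψ t) ^ k
    rw [hψdef]
    field_simp
  -- compute the left-hand side
  have hE_cd : ContDiff ℝ n (fun t : ℝ => (2 / (Real.exp t + 1)) ^ i) :=
    (contDiff_const.div (Real.contDiff_exp.add contDiff_const) (fun x => by positivity)).pow i
  have hLHS : iteratedDeriv n (fun t => f (ψ t)) 0
      = (2 : ℝ) ^ (-(i : ℤ)) * lam ^ n * Er i n := by
    set G : ℝ → ℝ := fun t => (2 / (Real.exp (lam * t) + 1)) ^ i with hGdef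
    have hG_cd : ContDiff ℝ n G := by exact hE_cd.comp (contDiff_const.mul contDiff_id)
    have hfun : (fun t : ℝ => f (ψ t)) = fun t : ℝ => (2 : ℝ) ^ (-(i : ℤ)) * G t := by
      funext t
      simp only [hψdef, hfdef, hGdef]
      rw [show (1 : ℝ) + (Real.exp t - 1) = Real.exp t by ring]
      rw [Real.rpow_def_of_pos (Real.exp_pos t), Real.log_exp, mul_comm t lam,
        zpow_neg, zpow_natCast]
      have hpos : (0:ℝ) < Real.exp (lam * t) + 1 := add_pos (Real.exp_pos _) one_pos
      rw [div_pow, div_pow, one_pow]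
      field_simp
    rw [hfun, iteratedDeriv_fun_const_mul hG_cd _ 0]
    have h7 := congrFun (iteratedDeriv_comp_const_mul hE_cd lam) 0
    simp only [mul_zero] at h7
    rw [hEr i hi n] at h7
    have h8 : iteratedDeriv n G 0 = lam ^ n * Er i n := h7
    rw [h8]
    ring
  rw [← hLHS, key, hRHS]
end

section
/- Let λ be a nonzero real number, let Bl_n(λ) be the Boole numbers, E_k the Euler numbers, and S₁(n,k) the signed Stirling numbers of the first kind. Then for every integer n ≥ 0 one has Bl_n(λ) = (1/2)·Σ_{k=0}^{n} E_k·λ^k·S₁(n,k). -/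
open Polynomial Finset

noncomputable def gBES : ℝ → ℝ := fun u => 1 / (Real.exp u + 1)

lemma gBES_contDiff : ContDiff ℝ (⊤ : ℕ∞) gBES := by
  apply ContDiff.div contDiff_const (Real.contDiff_exp.add contDiff_const)
  intro x; positivity

lemma gBES_iter_hasDerivAt (k : ℕ) (y : ℝ) :
    HasDerivAt (iteratedDeriv k gBES) (iteratedDeriv (k + 1) gBES y) y := by
  rw [iteratedDeriv_succ]
  have h1 : (k : ℕ∞) < ⊤ := lt_top_iff_ne_top.2 (by simp)
  have := ContDiff.differentiable_iteratedDeriv k gBES_contDiff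
    (by exact_mod_cast WithTop.coe_lt_coe.2 h1)
  exact this.differentiableAt.hasDerivAt

lemma coeffRecBES (n k : ℕ) :
    (descPochhammer ℝ (n + 1)).coeff (k + 1) =
      (descPochhammer ℝ n).coeff k - (n : ℝ) * (descPochhammer ℝ n).coeff (k + 1) := by
  rw [descPochhammer_succ_right, show ((n : ℝ[X])) = Polynomial.C (n : ℝ) by simp,
    Polynomial.coeff_mul_X_sub_C]
  ring

lemma coeffRec0BES (n : ℕ) :
    (descPochhammer ℝ (n + 1)).coeff 0 = -(n : ℝ) * (descPochhammer ℝ n).coeff 0 := by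
  rw [descPochhammer_succ_right, show ((n : ℝ[X])) = Polynomial.C (n : ℝ) by simp,
    Polynomial.mul_coeff_zero]
  simp; ring

lemma coeffTopBES (n : ℕ) : (descPochhammer ℝ n).coeff (n + 1) = 0 :=
  Polynomial.coeff_eq_zero_of_natDegree_lt (by simp)

/-- the combinatorial sum identity -/
lemma sumStepBES (n : ℕ) (lam : ℝ) (H : ℕ → ℝ) :
    ∑ k ∈ Finset.range (n + 2), (descPochhammer ℝ (n + 1)).coeff k * lam ^ k * H k =
      -(n : ℝ) * ∑ k ∈ Finset.range (n + 1), (descPochhammer ℝ n).coeff k * lam ^ k * H k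
      + lam * ∑ k ∈ Finset.range (n + 1),
          (descPochhammer ℝ n).coeff k * lam ^ k * H (k + 1) := by
  have hr : ∑ k ∈ Finset.range (n + 1), (descPochhammer ℝ n).coeff k * lam ^ k * H k
      = ∑ k ∈ Finset.range (n + 1),
          (descPochhammer ℝ n).coeff (k + 1) * lam ^ (k + 1) * H (k + 1)
        + (descPochhammer ℝ n).coeff 0 * lam ^ 0 * H 0 := by
    have e1 : ∑ k ∈ Finset.range (n + 2),
          (descPochhammer ℝ n).coeff k * lam ^ k * H k
        = ∑ k ∈ Finset.range (n + 1), (descPochhammer ℝ n).coeff k * lam ^ k * H k := by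
      rw [Finset.sum_range_succ, coeffTopBES]; ring
    rw [← e1, Finset.sum_range_succ' (fun k => (descPochhammer ℝ n).coeff k * lam ^ k * H k)
      (n + 1)]
  rw [Finset.sum_range_succ' (fun k => (descPochhammer ℝ (n + 1)).coeff k * lam ^ k * H k)
    (n + 1)]
  simp only [coeffRecBES, coeffRec0BES]
  rw [hr]
  rw [Finset.sum_congr rfl (fun k _ => by ring :
    ∀ k ∈ Finset.range (n + 1),
      ((descPochhammer ℝ n).coeff k - (n : ℝ) * (descPochhammer ℝ n).coeff (k + 1))
        * lam ^ (k + 1) * H (k + 1)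
      = -(n : ℝ) * ((descPochhammer ℝ n).coeff (k + 1) * lam ^ (k + 1) * H (k + 1))
        + lam * ((descPochhammer ℝ n).coeff k * lam ^ k * H (k + 1)))]
  rw [Finset.sum_add_distrib, ← Finset.mul_sum, ← Finset.mul_sum]
  ring

/-- Main induction: closed form of the iterated derivative on `Ioi (-1)`. -/
lemma keyBES (lam : ℝ) (n : ℕ) : ∀ t : ℝ, -1 < t →
    iteratedDeriv n (fun t : ℝ => 1 / ((1 + t) ^ lam + 1)) t =
      (1 + t) ^ (-(n : ℝ)) * ∑ k ∈ Finset.range (n + 1),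
        (descPochhammer ℝ n).coeff k * lam ^ k
          * iteratedDeriv k gBES (lam * Real.log (1 + t)) := by
  induction n with
  | zero =>
    intro t ht
    have h0 : (0:ℝ) < 1 + t := by linarith
    rw [iteratedDeriv_zero, show (0:ℕ)+1 = 1 from rfl, Finset.sum_range_one,
      show (descPochhammer ℝ 0).coeff 0 = 1 by simp]
    simp only [Nat.cast_zero, neg_zero, Real.rpow_zero, one_mul, pow_zero, mul_one]
    simp only [gBES, iteratedDeriv_zero]
    rw [Real.rpow_def_of_pos h0, mul_comm]
  | succ n IH =>
    intro t ht
    have h0 : (0:ℝ) < 1 + t := by linarith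
    have hne : (1 + t) ≠ 0 := ne_of_gt h0
    -- replace iteratedDeriv (n+1) by deriv of the closed form
    rw [iteratedDeriv_succ]
    have hev : (iteratedDeriv n (fun t : ℝ => 1 / ((1 + t) ^ lam + 1)))
        =ᶠ[nhds t] (fun s => (1 + s) ^ (-(n : ℝ)) * ∑ k ∈ Finset.range (n + 1),
          (descPochhammer ℝ n).coeff k * lam ^ k
            * iteratedDeriv k gBES (lam * Real.log (1 + s))) := by
      filter_upwards [Ioi_mem_nhds ht] with s hs
      exact IH s hs
    rw [hev.deriv_eq]
    -- compute the derivative via HasDerivAt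
    have h1 : HasDerivAt (fun s : ℝ => 1 + s) 1 t := by
      simpa using (hasDerivAt_id t).const_add (1 : ℝ)
    have hA : HasDerivAt (fun s : ℝ => (1 + s) ^ (-(n : ℝ)))
        (-(n : ℝ) * (1 + t) ^ (-(n : ℝ) - 1)) t := by
      have := (Real.hasDerivAt_rpow_const (p := -(n : ℝ)) (Or.inl hne)).comp t h1
      simpa only [mul_one, Function.comp_def] using this
    have hlog : HasDerivAt (fun s : ℝ => lam * Real.log (1 + s)) (lam * (1 / (1 + t))) t := by
      have := (h1.log hne).const_mul lam
      simpa using this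
    have hH : ∀ k : ℕ, HasDerivAt
        (fun s : ℝ => iteratedDeriv k gBES (lam * Real.log (1 + s)))
        (iteratedDeriv (k + 1) gBES (lam * Real.log (1 + t)) * (lam * (1 / (1 + t)))) t :=
      fun k => by
        have := (gBES_iter_hasDerivAt k (lam * Real.log (1 + t))).comp t hlog
        exact this
    have hB : HasDerivAt (fun s : ℝ => ∑ k ∈ Finset.range (n + 1),
        (descPochhammer ℝ n).coeff k * lam ^ k
          * iteratedDeriv k gBES (lam * Real.log (1 + s)))
        (∑ k ∈ Finset.range (n + 1), (descPochhammer ℝ n).coeff k * lam ^ k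
          * (iteratedDeriv (k + 1) gBES (lam * Real.log (1 + t)) * (lam * (1 / (1 + t))))) t := by
      apply HasDerivAt.fun_sum
      intro k _
      exact (hH k).const_mul _
    have hAB := hA.fun_mul hB
    rw [hAB.deriv]
    -- now pure algebra
    have hpow1 : (1 + t) ^ (-(n : ℝ) - 1) = (1 + t) ^ (-((n : ℝ) + 1)) := by ring_nf
    have hpow2 : (1 + t) ^ (-(n : ℝ)) * (1 / (1 + t)) = (1 + t) ^ (-((n : ℝ) + 1)) := by
      rw [show -((n : ℝ) + 1) = -(n : ℝ) - 1 from by ring, Real.rpow_sub h0, Real.rpow_one]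
      ring
    have hsum := sumStepBES n lam (fun k => iteratedDeriv k gBES (lam * Real.log (1 + t)))
    have hT : ∑ k ∈ Finset.range (n + 1), (descPochhammer ℝ n).coeff k * lam ^ k
          * (iteratedDeriv (k + 1) gBES (lam * Real.log (1 + t)) * (lam * (1 / (1 + t))))
        = (lam * (1 / (1 + t))) * ∑ k ∈ Finset.range (n + 1),
            (descPochhammer ℝ n).coeff k * lam ^ k
              * iteratedDeriv (k + 1) gBES (lam * Real.log (1 + t)) := by
      rw [Finset.mul_sum]
      exact Finset.sum_congr rfl fun k _ => by ring
    have hcast : -((n + 1 : ℕ) : ℝ) = -((n : ℝ) + 1) := by push_cast; ring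
    have key2 : (1 + t) ^ (-(n : ℝ)) = (1 + t) ^ (-((n : ℝ) + 1)) * (1 + t) := by
      rw [show -(n : ℝ) = -((n : ℝ) + 1) + 1 from by ring, Real.rpow_add h0, Real.rpow_one]
    rw [hcast, hsum, hT, hpow1, key2]
    field_simp

lemma iterCmulBES (c : ℝ) (k : ℕ) :
    iteratedDeriv k (fun t : ℝ => c * gBES t) = fun x => c * iteratedDeriv k gBES x := by
  induction k with
  | zero => funext x; simp
  | succ k ih =>
    funext x
    rw [iteratedDeriv_succ, ih, iteratedDeriv_succ]
    exact deriv_const_mul c (gBES_iter_hasDerivAt k x).differentiableAt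



/-- Let `λ ≠ 0`.  The Boole numbers `Bl n` are defined by
`1/((1+t)^λ+1) = Σ Bl n · tⁿ/n!` (so `Bl n` is the `n`-th derivative at `0` of
`t ↦ 1/((1+t)^λ+1)`, real power), the Euler numbers `E n` by
`2/(eᵗ+1) = Σ E n · tⁿ/n!`, and the signed Stirling numbers of the first kind
`S1 n k` by `x(x-1)⋯(x-n+1) = Σ_{k=0}^{n} S1 n k · xᵏ` (the falling factorial
being `descPochhammer`).  Then for every `n ≥ 0`:
`Bl n = (1/2) Σ_{k=0}^{n} E k · λᵏ · S1 n k`. -/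
theorem boole_euler_stirling1 (lam : ℝ) (hlam : lam ≠ 0)
    (Bl : ℕ → ℝ)
    (hBl : ∀ n : ℕ, iteratedDeriv n (fun t : ℝ => 1 / ((1 + t) ^ lam + 1)) 0 = Bl n)
    (E : ℕ → ℝ)
    (hE : ∀ n : ℕ, iteratedDeriv n (fun t : ℝ => 2 / (Real.exp t + 1)) 0 = E n)
    (S1 : ℕ → ℕ → ℝ)
    (hS1 : ∀ (n : ℕ) (x : ℝ),
      (descPochhammer ℝ n).eval x = ∑ k ∈ Finset.range (n + 1), S1 n k * x ^ k)
    (n : ℕ) :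
    Bl n = (1 / 2 : ℝ) * ∑ k ∈ Finset.range (n + 1), E k * lam ^ k * S1 n k := by
  -- identify S1 with the coefficients of descPochhammer
  have hpoly : ∀ m : ℕ, descPochhammer ℝ m
      = ∑ k ∈ Finset.range (m + 1), Polynomial.C (S1 m k) * Polynomial.X ^ k := by
    intro m
    apply Polynomial.funext
    intro x
    rw [hS1 m x]
    simp [Polynomial.eval_finset_sum]
  have hcoeff : ∀ m k : ℕ, k ∈ Finset.range (m + 1) →
      (descPochhammer ℝ m).coeff k = S1 m k := by
    intro m k hk
    rw [hpoly m, Polynomial.finset_sum_coeff]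
    simp only [Polynomial.coeff_C_mul, Polynomial.coeff_X_pow]
    rw [Finset.sum_eq_single k (fun j _ hj => by simp [Ne.symm hj]) (fun h => absurd hk h)]
    simp
  -- Euler numbers as derivatives of gBES
  have hgE : ∀ k : ℕ, iteratedDeriv k gBES 0 = E k / 2 := by
    intro k
    have h2 : (fun t : ℝ => 2 / (Real.exp t + 1)) = fun t => 2 * gBES t := by
      funext t; rw [gBES]; ring
    have := hE k
    rw [h2, iterCmulBES 2 k] at this
    have h3 : 2 * iteratedDeriv k gBES 0 = E k := this
    linarith
  -- apply the key lemma at t = 0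
  have hkey := keyBES lam n 0 (by norm_num)
  rw [hBl n] at hkey
  rw [hkey]
  have h10 : (1 : ℝ) + 0 = 1 := by norm_num
  rw [h10, Real.one_rpow, Real.log_one, mul_zero, one_mul, Finset.mul_sum]
  apply Finset.sum_congr rfl
  intro k hk
  rw [hgE k, hcoeff n k hk]
  ring
end

section
/- Let λ be a nonzero real number, let Bl_n^{(i)}(λ) be the higher-order Boole numbers, E_k^{(i)} the higher-order Euler numbers, and S₁(n,k) the signed Stirling numbers of the first kind. Then for every integer i ≥ 1 and every integer n ≥ 0 one has 2^i·Bl_n^{(i)}(λ) = Σ_{k=0}^{n} E_k^{(i)}·λ^k·S₁(n,k). -/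
open Real Filter Polynomial Finset

private lemma evEq_iteratedDeriv {f g : ℝ → ℝ} {x : ℝ} (h : f =ᶠ[nhds x] g) (n : ℕ) :
    iteratedDeriv n f =ᶠ[nhds x] iteratedDeriv n g := by
  induction n with
  | zero => simpa using h
  | succ n ih => simp only [iteratedDeriv_succ]; exact ih.deriv

private lemma iter_const_mul (c : ℝ) (f : ℝ → ℝ) (n : ℕ) :
    iteratedDeriv n (fun x => c * f x) = fun x => c * iteratedDeriv n f x := by
  induction n with
  | zero => simp [iteratedDeriv_zero]
  | succ n ih =>
    simp only [iteratedDeriv_succ, ih]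
    funext x
    exact deriv_const_mul_field c

private lemma coeff_rec (n k : ℕ) :
    (descPochhammer ℝ (n+1)).coeff k
      = (if k = 0 then 0 else (descPochhammer ℝ n).coeff (k-1))
        - (n : ℝ) * (descPochhammer ℝ n).coeff k := by
  rw [descPochhammer_succ_right]
  have : (n : ℝ[X]) = C (n:ℝ) := by simp
  rw [this, mul_sub, Polynomial.coeff_sub, Polynomial.coeff_mul_C]
  rcases k with _ | k
  · simp [mul_comm]
  · simp [Polynomial.coeff_mul_X, mul_comm]

private lemma main_lemma (lam : ℝ) (G : ℝ → ℝ) (hG : ContDiff ℝ ⊤ G) (n : ℕ) :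
    ∀ t : ℝ, -1 < t →
      iteratedDeriv n (fun s => G (lam * Real.log (1 + s))) t
        = (∑ k ∈ Finset.range (n+1),
            (descPochhammer ℝ n).coeff k * lam ^ k *
              iteratedDeriv k G (lam * Real.log (1 + t))) * (1 + t) ^ (-(n:ℤ)) := by
  induction n with
  | zero =>
    intro t ht
    simp [descPochhammer]
  | succ n ih =>
    intro t ht
    have hv : (0:ℝ) < 1 + t := by linarith
    have hv' : (1 + t : ℝ) ≠ 0 := ne_of_gt hv
    -- eventual equality of n-th derivative with RHS
    have hev : iteratedDeriv n (fun s => G (lam * Real.log (1 + s)))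
        =ᶠ[nhds t] fun s => (∑ k ∈ Finset.range (n+1),
            (descPochhammer ℝ n).coeff k * lam ^ k *
              iteratedDeriv k G (lam * Real.log (1 + s))) * (1 + s) ^ (-(n:ℤ)) := by
      filter_upwards [eventually_gt_nhds ht] with s hs
      exact ih s hs
    rw [iteratedDeriv_succ, hev.deriv_eq]
    -- derivative of inner function
    have hinner : HasDerivAt (fun s : ℝ => lam * Real.log (1 + s)) (lam * (1/(1+t))) t := by
      have h1 : HasDerivAt (fun s : ℝ => 1 + s) 1 t := (hasDerivAt_id t).const_add 1
      exact (h1.log hv').const_mul lam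
    set y := lam * Real.log (1 + t) with hy
    -- derivative of each iteratedDeriv k G composed
    have hA : ∀ k : ℕ, HasDerivAt (fun s => iteratedDeriv k G (lam * Real.log (1 + s)))
        (iteratedDeriv (k+1) G y * (lam * (1/(1+t)))) t := by
      intro k
      have hd : HasDerivAt (iteratedDeriv k G) (iteratedDeriv (k+1) G y) y := by
        rw [iteratedDeriv_succ]
        exact ((hG.differentiable_iteratedDeriv k (by simp)) y).hasDerivAt
      exact hd.comp t hinner
    have hSum : HasDerivAt (fun s => ∑ k ∈ Finset.range (n+1),
        (descPochhammer ℝ n).coeff k * lam ^ k *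
          iteratedDeriv k G (lam * Real.log (1 + s)))
        (∑ k ∈ Finset.range (n+1),
          (descPochhammer ℝ n).coeff k * lam ^ k *
            (iteratedDeriv (k+1) G y * (lam * (1/(1+t))))) t := by
      exact HasDerivAt.fun_sum fun k _ => (hA k).const_mul _
    have hB : HasDerivAt (fun s : ℝ => (1 + s) ^ (-(n:ℤ)))
        (((-(n:ℤ)):ℝ) * (1+t) ^ (-(n:ℤ) - 1)) t := by
      have h1 : HasDerivAt (fun s : ℝ => 1 + s) 1 t := (hasDerivAt_id t).const_add 1
      have h2 := (hasDerivAt_zpow (-(n:ℤ)) (1+t) (Or.inl hv')).comp t h1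
      simpa [Function.comp_def] using h2
    have hprod := hSum.fun_mul hB
    rw [hprod.deriv]
    -- now pure algebra
    set c : ℕ → ℝ := fun k => (descPochhammer ℝ n).coeff k with hc
    set D : ℕ → ℝ := fun k => iteratedDeriv k G y with hD
    have hzp1 : (1+t) ^ (-(n:ℤ)) * (1/(1+t)) = (1+t) ^ (-((n:ℤ)+1)) := by
      rw [one_div, ← zpow_neg_one, ← zpow_add₀ hv']
      ring_nf
    have hzp2 : (1+t) ^ (-(n:ℤ) - 1) = (1+t) ^ (-((n:ℤ)+1)) := by ring_nf
    have hcast : (-(((n:ℕ)+1 : ℕ)):ℤ) = -((n:ℤ)+1) := by push_cast; ring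
    rw [hcast]
    have htop : c (n+1) = 0 := by
      rw [hc]
      exact Polynomial.coeff_eq_zero_of_natDegree_lt (by simp)
    have hexp : ∀ k, (descPochhammer ℝ (n+1)).coeff k
        = (if k = 0 then 0 else c (k-1)) - (n : ℝ) * c k := coeff_rec n
    set w : ℝ := (1+t) ^ (-((n:ℤ)+1)) with hwdef
    rw [Finset.sum_mul, Finset.sum_mul, Finset.sum_mul]
    have hR : ∑ k ∈ Finset.range (n+2), (descPochhammer ℝ (n+1)).coeff k * lam ^ k * D k * w
        = (∑ k ∈ Finset.range (n+1), c k * lam ^ (k+1) * D (k+1) * w)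
          + ∑ k ∈ Finset.range (n+1), (-(n:ℝ)) * (c k * lam ^ k * D k * w) := by
      have hterm : ∀ k ∈ Finset.range (n+2),
          (descPochhammer ℝ (n+1)).coeff k * lam ^ k * D k * w
            = ((if k = 0 then (0:ℝ) else c (k-1)) * lam ^ k * D k * w)
              + (-(n:ℝ)) * (c k * lam ^ k * D k * w) := by
        intro k _
        rw [hexp k]; ring
      rw [Finset.sum_congr rfl hterm, Finset.sum_add_distrib]
      congr 1
      · rw [Finset.sum_range_succ'
          (fun k => (if k = 0 then (0:ℝ) else c (k-1)) * lam ^ k * D k * w) (n+1)]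
        simp
      · rw [Finset.sum_range_succ (fun k => (-(n:ℝ)) * (c k * lam ^ k * D k * w)) (n+1),
          htop]
        simp
    rw [hR]
    congr 1
    · apply Finset.sum_congr rfl
      intro k _
      simp only [hc, hD]
      rw [← hzp1]; ring
    · apply Finset.sum_congr rfl
      intro k _
      simp only [hc, hD]
      rw [hzp2, ← hzp1]; push_cast; ring


/-- Let `λ ≠ 0`.  For `r ≥ 1` the higher-order Boole numbers
`Blr r n` are defined by `(1/((1+t)^λ+1))^r = Σ Blr r n · tⁿ/n!` (real power),
the higher-order Euler numbers `Er i n` by `(2/(eᵗ+1))ⁱ = Σ Er i n · tⁿ/n!`,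
and the signed Stirling numbers of the first kind `S1 n k` by
`x(x-1)⋯(x-n+1) = Σ_{k=0}^{n} S1 n k · xᵏ`.  Then for all `i ≥ 1` and `n ≥ 0`:
`2ⁱ·Blr i n = Σ_{k=0}^{n} Er i k · λᵏ · S1 n k`. -/
theorem higher_boole_euler_stirling1 (lam : ℝ) (hlam : lam ≠ 0)
    (Blr : ℕ → ℕ → ℝ)
    (hBlr : ∀ r : ℕ, 1 ≤ r → ∀ n : ℕ,
      iteratedDeriv n (fun t : ℝ => (1 / ((1 + t) ^ lam + 1)) ^ r) 0 = Blr r n)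
    (Er : ℕ → ℕ → ℝ)
    (hEr : ∀ i : ℕ, 1 ≤ i → ∀ n : ℕ,
      iteratedDeriv n (fun t : ℝ => (2 / (Real.exp t + 1)) ^ i) 0 = Er i n)
    (S1 : ℕ → ℕ → ℝ)
    (hS1 : ∀ (n : ℕ) (x : ℝ),
      (descPochhammer ℝ n).eval x = ∑ k ∈ Finset.range (n + 1), S1 n k * x ^ k)
    (i : ℕ) (hi : 1 ≤ i) (n : ℕ) :
    (2 : ℝ) ^ i * Blr i n = ∑ k ∈ Finset.range (n + 1), Er i k * lam ^ k * S1 n k := by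
  set G : ℝ → ℝ := fun u => (2 / (Real.exp u + 1)) ^ i with hGdef
  have hne : ∀ u : ℝ, Real.exp u + 1 ≠ 0 := fun u => by positivity
  have hG : ContDiff ℝ ⊤ G := by
    apply ContDiff.pow
    exact contDiff_const.div (Real.contDiff_exp.add contDiff_const) hne
  have hev : (fun s : ℝ => G (lam * Real.log (1 + s)))
      =ᶠ[nhds (0:ℝ)] fun s => (2:ℝ) ^ i * (1 / ((1 + s) ^ lam + 1)) ^ i := by
    filter_upwards [eventually_gt_nhds (show (-1:ℝ) < 0 by norm_num)] with s hs
    have hpos : (0:ℝ) < 1 + s := by linarith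
    have hr : (1 + s) ^ lam = Real.exp (lam * Real.log (1 + s)) := by
      rw [Real.rpow_def_of_pos hpos, mul_comm]
    simp only [hGdef, hr, ← mul_pow]
    congr 1
    rw [mul_one_div]
  have h0 : iteratedDeriv n (fun s => G (lam * Real.log (1 + s))) 0
      = (2:ℝ) ^ i * Blr i n := by
    rw [(evEq_iteratedDeriv hev n).self_of_nhds, iter_const_mul]
    exact congrArg (fun z => (2:ℝ) ^ i * z) (hBlr i hi n)
  have key := main_lemma lam G hG n 0 (by norm_num)
  have hD0 : ∀ k : ℕ, iteratedDeriv k G (lam * Real.log (1 + 0)) = Er i k := by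
    intro k
    simp only [add_zero, Real.log_one, mul_zero]
    exact hEr i hi k
  have hco : ∀ k ∈ Finset.range (n+1), (descPochhammer ℝ n).coeff k = S1 n k := by
    have hpq : descPochhammer ℝ n
        = ∑ k ∈ Finset.range (n+1), Polynomial.C (S1 n k) * Polynomial.X ^ k := by
      apply Polynomial.funext
      intro x
      rw [hS1 n x]
      simp [Polynomial.eval_finset_sum]
    intro k hk
    rw [hpq, Polynomial.finset_sum_coeff]
    simp only [Polynomial.coeff_C_mul, Polynomial.coeff_X_pow]
    rw [Finset.sum_eq_single k]
    · simp
    · intro j _ hj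
      simp [Ne.symm hj]
    · intro h
      exact absurd hk h
  rw [← h0, key]
  simp only [show ((1:ℝ) + 0) ^ (-(n:ℤ)) = 1 by norm_num, mul_one]
  apply Finset.sum_congr rfl
  intro k hk
  rw [hco k hk, hD0 k]
  ring
end
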